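/- arXiv:1505.07472 — 6 statements merged into one kernel-verified Lean document; each statement's English description precedes it below -/
import Mathlib

section
/- Let F be a field, Σ a finite alphabet, and consider formal power series over F in noncommuting variables, i.e., functions FreeMonoid Σ → F with convolution product. A series S is recognizable (there exist n, c ∈ F^{1×n}, b ∈ F^{n×1}, and matrices A_x ∈ F^{n×n} for each x ∈ Σ, such that (S, w) = c · A_{w₁} ⋯ A_{w_{|w|}} · b for all words w) if and only if S lies in a finitely generated F-subspace of the series algebra that is stable under all left shift operators L_x defined by (L_x S, w) = (S, xw). -/
open Matrix

/-- A noncommutative formal power series over a field is recognizable (admits a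
linear representation) iff it lies in a finitely generated subspace of the
series algebra that is stable under all left shift operators. -/
theorem stmt_2 {F σ : Type*} [Field F] [Fintype σ] (S : List σ → F) :
    (∃ (n : ℕ) (c : Fin n → F) (A : σ → Matrix (Fin n) (Fin n) F) (b : Fin n → F),
        ∀ w : List σ, S w = c ⬝ᵥ ((w.map A).prod).mulVec b) ↔
      (∃ M : Submodule F (List σ → F), M.FG ∧
        (∀ (x : σ), ∀ T ∈ M, (fun w => T (x :: w)) ∈ M) ∧ S ∈ M) := by
  constructor
  · rintro ⟨n, c, A, b, hS⟩
    -- the linear map sending a row vector v to the series w ↦ v ⬝ (∏ A) ⬝ b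
    let φ : (Fin n → F) →ₗ[F] (List σ → F) :=
      { toFun := fun v => fun w => v ⬝ᵥ ((w.map A).prod).mulVec b
        map_add' := by
          intro u v; funext w; simp [add_dotProduct]
        map_smul' := by
          intro a v; funext w; simp [smul_dotProduct] }
    refine ⟨LinearMap.range φ, ?_, ?_, ?_⟩
    · rw [LinearMap.range_eq_map]
      exact Submodule.FG.map φ (Module.Finite.fg_top (R := F) (M := Fin n → F))
    · rintro x T ⟨v, rfl⟩
      refine ⟨v ᵥ* A x, ?_⟩
      funext w
      show (v ᵥ* A x) ⬝ᵥ ((w.map A).prod).mulVec b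
        = v ⬝ᵥ (((x :: w).map A).prod).mulVec b
      simp [List.map_cons, List.prod_cons, Matrix.dotProduct_mulVec,
        Matrix.vecMul_vecMul]
    · exact ⟨c, funext fun w => (hS w).symm⟩
  · rintro ⟨M, hFG, hstab, hSM⟩
    obtain ⟨n, g, hspan⟩ := Submodule.fg_iff_exists_fin_generating_family.mp hFG
    have hg : ∀ i, g i ∈ M := fun i => by
      rw [← hspan]; exact Submodule.subset_span ⟨i, rfl⟩
    -- coefficients of each shifted generator
    have hA : ∀ (x : σ) (i : Fin n), ∃ a : Fin n → F,
        (∑ j, a j • g j) = fun w => g i (x :: w) := by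
      intro x i
      have : (fun w => g i (x :: w)) ∈ M := hstab x (g i) (hg i)
      rw [← hspan] at this
      exact (Submodule.mem_span_range_iff_exists_fun F).mp this
    choose A hAspec using hA
    have hc : ∃ c : Fin n → F, (∑ i, c i • g i) = S := by
      have : S ∈ Submodule.span F (Set.range g) := hspan ▸ hSM
      exact (Submodule.mem_span_range_iff_exists_fun F).mp this
    obtain ⟨c, hc⟩ := hc
    refine ⟨n, c, fun x => Matrix.of fun i j => A x i j, fun i => g i [], ?_⟩
    have key : ∀ (w : List σ) (v : Fin n → F),
        (∑ i, v i • g i) w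
          = v ⬝ᵥ ((w.map fun x => Matrix.of fun i j => A x i j).prod).mulVec
              (fun i => g i []) := by
      intro w
      induction w with
      | nil =>
        intro v
        simp [dotProduct, Finset.sum_apply]
      | cons x w ih =>
        intro v
        rw [List.map_cons, List.prod_cons, ← Matrix.mulVec_mulVec,
          Matrix.dotProduct_mulVec, ← ih (v ᵥ* Matrix.of fun i j => A x i j)]
        have h1 : (∑ i, v i • g i) (x :: w) = ∑ i, v i * g i (x :: w) := by
          simp [Finset.sum_apply]
        rw [h1]
        have h2 : ∀ i, g i (x :: w) = ∑ j, A x i j * g j w := by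
          intro i
          have := congrFun (hAspec x i) w
          simpa [Finset.sum_apply] using this.symm
        simp only [h2]
        rw [Finset.sum_apply]
        simp only [Pi.smul_apply, smul_eq_mul, Matrix.vecMul, dotProduct,
          Matrix.of_apply, Finset.sum_mul, Finset.mul_sum]
        rw [Finset.sum_comm]
        congr 1; ext j; congr 1; ext i; ring
    intro w
    rw [← hc]
    exact key w c
end

section
/- Let F be a field and S a recognizable noncommutative formal power series over F with representation (c, A, b) of dimension n, such that a := (S, 1) = c·b is invertible (nonzero) in F. Then S is invertible in the convolution algebra and S⁻¹ has the representation ((−a⁻¹c, a⁻¹), [[A(I − b a⁻¹ c), A b a⁻¹],[0, 0]], (0; 1)) of dimension n + 1. -/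
open Matrix

namespace Stmt5Aux

variable {F σ : Type*} [Field F] {n : ℕ}
variable (c : Fin n → F) (A : σ → Matrix (Fin n) (Fin n) F) (b : Fin n → F)

lemma vecMul_vecMulVec' (v w u : Fin n → F) :
    Matrix.vecMul v (Matrix.vecMulVec w u) = (v ⬝ᵥ w) • u := by
  ext j
  simp only [Matrix.vecMul, dotProduct, Matrix.vecMulVec_apply, Pi.smul_apply,
    smul_eq_mul, Finset.sum_mul]
  exact Finset.sum_congr rfl fun i _ => by ring

lemma vecMulVec_mulVec' (v w u : Fin n → F) :
    (Matrix.vecMulVec w u).mulVec v = (u ⬝ᵥ v) • w := by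
  ext i
  simp only [Matrix.mulVec, dotProduct, Matrix.vecMulVec_apply, Pi.smul_apply,
    smul_eq_mul, Finset.sum_mul]
  exact Finset.sum_congr rfl fun j _ => by ring

noncomputable def Mx (x : σ) : Matrix (Fin n) (Fin n) F :=
  A x * (1 - Matrix.vecMulVec b (fun j => (c ⬝ᵥ b)⁻¹ * c j))

noncomputable def fB (x : σ) : Matrix (Fin n ⊕ Fin 1) (Fin n ⊕ Fin 1) F :=
  Matrix.fromBlocks (Mx c A b x)
    (Matrix.of fun i (_ : Fin 1) => ((A x).mulVec b) i * (c ⬝ᵥ b)⁻¹) 0 0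

noncomputable def Tf (w : List σ) : F :=
  Sum.elim (fun i => -(c ⬝ᵥ b)⁻¹ * c i) (fun _ : Fin 1 => (c ⬝ᵥ b)⁻¹) ⬝ᵥ
    ((w.map (fB c A b)).prod).mulVec (Sum.elim 0 (fun _ : Fin 1 => 1))

lemma vecMul_Mx (v : Fin n → F) (x : σ) :
    Matrix.vecMul v (Mx c A b x) =
      Matrix.vecMul v (A x) - (Matrix.vecMul v (A x) ⬝ᵥ b) • fun j => (c ⬝ᵥ b)⁻¹ * c j := by
  rw [Mx, ← Matrix.vecMul_vecMul, Matrix.vecMul_sub, Matrix.vecMul_one, vecMul_vecMulVec']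

lemma mulVec_Mx_b (ha : c ⬝ᵥ b ≠ 0) (x : σ) : (Mx c A b x).mulVec b = 0 := by
  have hu : (fun j => (c ⬝ᵥ b)⁻¹ * c j) ⬝ᵥ b = 1 := by
    simp only [dotProduct, mul_assoc, ← Finset.mul_sum]
    exact inv_mul_cancel₀ ha
  rw [Mx, ← Matrix.mulVec_mulVec, Matrix.sub_mulVec, Matrix.one_mulVec, vecMulVec_mulVec',
    hu, one_smul, sub_self, Matrix.mulVec_zero]

lemma row_inl (w : List σ) (i : Fin n) :
    Matrix.vecMul (Sum.elim (fun i => -(c ⬝ᵥ b)⁻¹ * c i) (fun _ : Fin 1 => (c ⬝ᵥ b)⁻¹))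
      ((w.map (fB c A b)).prod) (Sum.inl i)
      = -(c ⬝ᵥ b)⁻¹ * Matrix.vecMul c ((w.map (Mx c A b)).prod) i := by
  induction w using List.reverseRecOn generalizing i with
  | nil => simp
  | append_singleton w x ih =>
      rw [List.map_append, List.map_append, List.prod_append, List.prod_append,
        List.map_singleton, List.map_singleton, List.prod_singleton, List.prod_singleton,
        ← Matrix.vecMul_vecMul, ← Matrix.vecMul_vecMul, fB, Matrix.vecMul_fromBlocks]
      simp only [Sum.elim_inl, Matrix.vecMul_zero, add_zero, Pi.add_apply, Pi.zero_apply]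
      have hfun : (Matrix.vecMul (Sum.elim (fun i => -(c ⬝ᵥ b)⁻¹ * c i)
          (fun _ : Fin 1 => (c ⬝ᵥ b)⁻¹)) ((w.map (fB c A b)).prod)) ∘ Sum.inl
          = fun i => -(c ⬝ᵥ b)⁻¹ * Matrix.vecMul c ((w.map (Mx c A b)).prod) i :=
        funext fun i => ih i
      rw [hfun]
      have : (fun i => -(c ⬝ᵥ b)⁻¹ * Matrix.vecMul c ((w.map (Mx c A b)).prod) i)
          = (-(c ⬝ᵥ b)⁻¹) • Matrix.vecMul c ((w.map (Mx c A b)).prod) := rfl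
      rw [this, Matrix.smul_vecMul, Pi.smul_apply, smul_eq_mul]

lemma Tf_nil : Tf c A b [] = (c ⬝ᵥ b)⁻¹ := by
  simp [Tf, dotProduct, Fintype.sum_sum_type]

lemma Tf_concat (w : List σ) (x : σ) :
    Tf c A b (w ++ [x]) =
      -(c ⬝ᵥ b)⁻¹ * (Matrix.vecMul c ((w.map (Mx c A b)).prod) ⬝ᵥ (A x).mulVec b)
        * (c ⬝ᵥ b)⁻¹ := by
  rw [Tf, List.map_append, List.prod_append, List.map_singleton, List.prod_singleton,
    ← Matrix.mulVec_mulVec, fB, Matrix.fromBlocks_mulVec]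
  have h0 : (Sum.elim (0 : Fin n → F) (fun _ : Fin 1 => 1)) ∘ Sum.inl = 0 := rfl
  have h1 : (Sum.elim (0 : Fin n → F) (fun _ : Fin 1 => 1)) ∘ Sum.inr =
      fun _ : Fin 1 => 1 := rfl
  rw [h0, h1]
  simp only [Matrix.mulVec_zero, Matrix.zero_mulVec, zero_add, add_zero]
  have h2 : ((Matrix.of fun i (_ : Fin 1) => ((A x).mulVec b) i * (c ⬝ᵥ b)⁻¹) *ᵥ
      (fun _ : Fin 1 => (1:F))) = fun i => ((A x).mulVec b) i * (c ⬝ᵥ b)⁻¹ := by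
    ext i
    simp [Matrix.mulVec, dotProduct]
  rw [h2, Matrix.dotProduct_mulVec, dotProduct, Fintype.sum_sum_type]
  simp only [Sum.elim_inl, Sum.elim_inr, Pi.zero_apply, mul_zero, Finset.sum_const_zero,
    add_zero, row_inl]
  simp only [dotProduct, Finset.mul_sum, Finset.sum_mul, neg_mul, Finset.sum_neg_distrib]
  congr 1
  exact Finset.sum_congr rfl fun j _ => by ring

lemma inv1 (ha : c ⬝ᵥ b ≠ 0) (w : List σ) (j : Fin n) :
    (∑ k ∈ Finset.range (w.length + 1),
      Tf c A b (w.take k) * Matrix.vecMul c (((w.drop k).map A).prod) j)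
      = (c ⬝ᵥ b)⁻¹ * Matrix.vecMul c ((w.map (Mx c A b)).prod) j := by
  induction w using List.reverseRecOn generalizing j with
  | nil => simp [Tf_nil]
  | append_singleton w x ih =>
      have hlen : (w ++ [x]).length + 1 = (w.length + 1) + 1 := by simp
      rw [hlen, Finset.sum_range_succ]
      have htake : (w ++ [x]).take (w.length + 1) = w ++ [x] := by
        rw [show w.length + 1 = (w ++ [x]).length by simp, List.take_length]
      have hdrop : (w ++ [x]).drop (w.length + 1) = [] := by
        rw [show w.length + 1 = (w ++ [x]).length by simp, List.drop_length]
      rw [htake, hdrop]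
      have hvm : ∀ (v : Fin n → F) (j : Fin n),
          Matrix.vecMul v (A x) j = ∑ i, v i * A x i j := by
        intro v j; simp [Matrix.vecMul, dotProduct]
      have hmain : ∑ k ∈ Finset.range (w.length + 1),
          Tf c A b ((w ++ [x]).take k) *
            Matrix.vecMul c ((((w ++ [x]).drop k).map A).prod) j
          = ∑ i, ((c ⬝ᵥ b)⁻¹ * Matrix.vecMul c ((w.map (Mx c A b)).prod) i) * A x i j := by
        have h1 : ∀ k ∈ Finset.range (w.length + 1),
            Tf c A b ((w ++ [x]).take k) *
              Matrix.vecMul c ((((w ++ [x]).drop k).map A).prod) j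
            = ∑ i, (Tf c A b (w.take k) *
                Matrix.vecMul c (((w.drop k).map A).prod) i) * A x i j := by
          intro k hk
          rw [Finset.mem_range, Nat.lt_succ_iff] at hk
          rw [List.take_append_of_le_length hk, List.drop_append_of_le_length hk,
            List.map_append, List.prod_append, List.map_singleton, List.prod_singleton,
            ← Matrix.vecMul_vecMul]
          rw [hvm, Finset.mul_sum]
          exact Finset.sum_congr rfl fun i _ => by ring
        rw [Finset.sum_congr rfl h1, Finset.sum_comm]
        refine Finset.sum_congr rfl fun i _ => ?_
        rw [← Finset.sum_mul, ih]
      rw [hmain, Tf_concat, List.map_append, List.prod_append, List.map_singleton,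
        List.prod_singleton, ← Matrix.vecMul_vecMul, vecMul_Mx, List.map_nil,
        List.prod_nil, Matrix.vecMul_one, Matrix.dotProduct_mulVec]
      simp only [Pi.sub_apply, Pi.smul_apply, smul_eq_mul]
      rw [hvm, mul_sub, Finset.mul_sum, sub_eq_add_neg]
      congr 1
      · exact Finset.sum_congr rfl fun i _ => by ring
      · ring

lemma vecMul_apply' (v : Fin n → F) (M : Matrix (Fin n) (Fin n) F) (j : Fin n) :
    Matrix.vecMul v M j = ∑ i, v i * M i j := by
  simp [Matrix.vecMul, dotProduct]

lemma inv2 (ha : c ⬝ᵥ b ≠ 0) (w : List σ) (j : Fin n) :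
    (∑ k ∈ Finset.range (w.length + 1),
      (c ⬝ᵥ (((w.take k).map A).prod).mulVec b) *
        ((c ⬝ᵥ b)⁻¹ * Matrix.vecMul c (((w.drop k).map (Mx c A b)).prod) j))
      = Matrix.vecMul c ((w.map A).prod) j := by
  induction w using List.reverseRecOn generalizing j with
  | nil =>
      simp only [List.length_nil, Finset.range_one, Finset.sum_singleton, List.take_nil,
        List.drop_nil, List.map_nil, List.prod_nil, Matrix.one_mulVec, Matrix.vecMul_one]
      rw [← mul_assoc, mul_inv_cancel₀ ha, one_mul]
      simp
  | append_singleton w x ih =>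
      have hlen : (w ++ [x]).length + 1 = (w.length + 1) + 1 := by simp
      rw [hlen, Finset.sum_range_succ]
      have htake : (w ++ [x]).take (w.length + 1) = w ++ [x] := by
        rw [show w.length + 1 = (w ++ [x]).length by simp, List.take_length]
      have hdrop : (w ++ [x]).drop (w.length + 1) = [] := by
        rw [show w.length + 1 = (w ++ [x]).length by simp, List.drop_length]
      rw [htake, hdrop]
      have hmain : ∑ k ∈ Finset.range (w.length + 1),
          (c ⬝ᵥ ((((w ++ [x]).take k).map A).prod).mulVec b) *
            ((c ⬝ᵥ b)⁻¹ * Matrix.vecMul c ((((w ++ [x]).drop k).map (Mx c A b)).prod) j)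
          = ∑ i, Matrix.vecMul c ((w.map A).prod) i * Mx c A b x i j := by
        have h1 : ∀ k ∈ Finset.range (w.length + 1),
            (c ⬝ᵥ ((((w ++ [x]).take k).map A).prod).mulVec b) *
              ((c ⬝ᵥ b)⁻¹ * Matrix.vecMul c ((((w ++ [x]).drop k).map (Mx c A b)).prod) j)
            = ∑ i, ((c ⬝ᵥ (((w.take k).map A).prod).mulVec b) *
                ((c ⬝ᵥ b)⁻¹ * Matrix.vecMul c (((w.drop k).map (Mx c A b)).prod) i)) *
                  Mx c A b x i j := by
          intro k hk
          rw [Finset.mem_range, Nat.lt_succ_iff] at hk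
          rw [List.take_append_of_le_length hk, List.drop_append_of_le_length hk,
            List.map_append, List.prod_append, List.map_singleton, List.prod_singleton,
            ← Matrix.vecMul_vecMul, vecMul_apply', Finset.mul_sum, Finset.mul_sum]
          exact Finset.sum_congr rfl fun i _ => by ring
        rw [Finset.sum_congr rfl h1, Finset.sum_comm]
        refine Finset.sum_congr rfl fun i _ => ?_
        rw [← Finset.sum_mul, ih]
      rw [hmain, List.map_nil, List.prod_nil, Matrix.vecMul_one, List.map_append,
        List.prod_append, List.map_singleton, List.prod_singleton,
        ← Matrix.mulVec_mulVec, Matrix.dotProduct_mulVec, ← Matrix.vecMul_vecMul,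
        vecMul_apply' (Matrix.vecMul c ((w.map A).prod)) (A x) j]
      have hAV : A x * Matrix.vecMulVec b (fun j => (c ⬝ᵥ b)⁻¹ * c j)
          = Matrix.vecMulVec ((A x).mulVec b) (fun j => (c ⬝ᵥ b)⁻¹ * c j) := by
        ext i j
        simp only [Matrix.mul_apply, Matrix.vecMulVec_apply, Matrix.mulVec,
          dotProduct, Finset.sum_mul]
        exact Finset.sum_congr rfl fun l _ => by ring
      have h2 : ∀ i : Fin n, Mx c A b x i j
          = A x i j - ((A x).mulVec b) i * ((c ⬝ᵥ b)⁻¹ * c j) := by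
        intro i
        rw [Mx, mul_sub, mul_one, hAV, Matrix.sub_apply, Matrix.vecMulVec_apply]
      have h4 : ∑ i, Matrix.vecMul c ((w.map A).prod) i * Mx c A b x i j
          = ∑ i, (Matrix.vecMul c ((w.map A).prod) i * A x i j
              - Matrix.vecMul c ((w.map A).prod) i *
                (((A x).mulVec b) i * ((c ⬝ᵥ b)⁻¹ * c j))) :=
        Finset.sum_congr rfl fun i _ => by rw [h2 i]; ring
      rw [h4, Finset.sum_sub_distrib]
      have h3 : ∑ i, Matrix.vecMul c ((w.map A).prod) i *
            (((A x).mulVec b) i * ((c ⬝ᵥ b)⁻¹ * c j))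
          = (Matrix.vecMul c ((w.map A).prod) ⬝ᵥ (A x).mulVec b) * ((c ⬝ᵥ b)⁻¹ * c j) := by
        simp only [dotProduct, Finset.sum_mul]
        exact Finset.sum_congr rfl fun i _ => by ring
      rw [h3]
      ring

lemma Mprod_mulVec_zero (ha : c ⬝ᵥ b ≠ 0) (w : List σ) (x : σ) :
    (((w ++ [x]).map (Mx c A b)).prod).mulVec b = 0 := by
  rw [List.map_append, List.prod_append, List.map_singleton, List.prod_singleton,
    ← Matrix.mulVec_mulVec, mulVec_Mx_b c A b ha, Matrix.mulVec_zero]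

lemma conv_TS (ha : c ⬝ᵥ b ≠ 0) (w : List σ) :
    (∑ k ∈ Finset.range (w.length + 1),
      Tf c A b (w.take k) * (c ⬝ᵥ (((w.drop k).map A).prod).mulVec b))
    = (c ⬝ᵥ b)⁻¹ * (c ⬝ᵥ ((w.map (Mx c A b)).prod).mulVec b) := by
  have h1 : ∀ k ∈ Finset.range (w.length + 1),
      Tf c A b (w.take k) * (c ⬝ᵥ (((w.drop k).map A).prod).mulVec b)
      = ∑ j, (Tf c A b (w.take k) *
          Matrix.vecMul c (((w.drop k).map A).prod) j) * b j := by
    intro k _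
    rw [Matrix.dotProduct_mulVec, dotProduct, Finset.mul_sum]
    exact Finset.sum_congr rfl fun j _ => by ring
  rw [Finset.sum_congr rfl h1, Finset.sum_comm]
  have h2 : ∀ j : Fin n, (∑ k ∈ Finset.range (w.length + 1),
      (Tf c A b (w.take k) * Matrix.vecMul c (((w.drop k).map A).prod) j) * b j)
      = ((c ⬝ᵥ b)⁻¹ * Matrix.vecMul c ((w.map (Mx c A b)).prod) j) * b j := by
    intro j
    rw [← Finset.sum_mul, inv1 c A b ha]
  rw [Finset.sum_congr rfl fun j _ => h2 j, Matrix.dotProduct_mulVec]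
  simp only [dotProduct, Finset.mul_sum]
  exact Finset.sum_congr rfl fun j _ => by ring

lemma conv_ST (ha : c ⬝ᵥ b ≠ 0) (w : List σ) (x : σ) :
    (∑ k ∈ Finset.range ((w ++ [x]).length + 1),
      (c ⬝ᵥ ((((w ++ [x]).take k).map A).prod).mulVec b) * Tf c A b ((w ++ [x]).drop k))
    = 0 := by
  have hlen : (w ++ [x]).length + 1 = (w.length + 1) + 1 := by simp
  rw [hlen, Finset.sum_range_succ]
  have htake : (w ++ [x]).take (w.length + 1) = w ++ [x] := by
    rw [show w.length + 1 = (w ++ [x]).length by simp, List.take_length]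
  have hdrop : (w ++ [x]).drop (w.length + 1) = [] := by
    rw [show w.length + 1 = (w ++ [x]).length by simp, List.drop_length]
  rw [htake, hdrop, Tf_nil]
  have h1 : ∀ k ∈ Finset.range (w.length + 1),
      (c ⬝ᵥ ((((w ++ [x]).take k).map A).prod).mulVec b) * Tf c A b ((w ++ [x]).drop k)
      = ∑ j, -(((c ⬝ᵥ (((w.take k).map A).prod).mulVec b) *
          ((c ⬝ᵥ b)⁻¹ * Matrix.vecMul c (((w.drop k).map (Mx c A b)).prod) j)) *
            (((A x).mulVec b) j * (c ⬝ᵥ b)⁻¹)) := by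
    intro k hk
    rw [Finset.mem_range, Nat.lt_succ_iff] at hk
    rw [List.take_append_of_le_length hk, List.drop_append_of_le_length hk, Tf_concat]
    have hD : Matrix.vecMul c (((w.drop k).map (Mx c A b)).prod) ⬝ᵥ (A x).mulVec b
        = ∑ j, Matrix.vecMul c (((w.drop k).map (Mx c A b)).prod) j * ((A x).mulVec b) j :=
      rfl
    rw [hD, neg_mul, Finset.mul_sum, neg_mul, Finset.sum_mul, mul_neg, Finset.mul_sum,
      ← Finset.sum_neg_distrib]
    exact Finset.sum_congr rfl fun j _ => by ring
  rw [Finset.sum_congr rfl h1, Finset.sum_comm]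
  have h2 : ∀ j : Fin n, (∑ k ∈ Finset.range (w.length + 1),
      -(((c ⬝ᵥ (((w.take k).map A).prod).mulVec b) *
          ((c ⬝ᵥ b)⁻¹ * Matrix.vecMul c (((w.drop k).map (Mx c A b)).prod) j)) *
            (((A x).mulVec b) j * (c ⬝ᵥ b)⁻¹)))
      = -(Matrix.vecMul c ((w.map A).prod) j * (((A x).mulVec b) j * (c ⬝ᵥ b)⁻¹)) := by
    intro j
    rw [Finset.sum_neg_distrib, neg_inj, ← Finset.sum_mul, inv2 c A b ha]
  rw [Finset.sum_congr rfl fun j _ => h2 j, List.map_append, List.prod_append,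
    List.map_singleton, List.prod_singleton, ← Matrix.mulVec_mulVec,
    Matrix.dotProduct_mulVec]
  have hD2 : Matrix.vecMul c ((w.map A).prod) ⬝ᵥ (A x).mulVec b
      = ∑ j, Matrix.vecMul c ((w.map A).prod) j * ((A x).mulVec b) j := rfl
  rw [hD2, Finset.sum_neg_distrib, Finset.sum_mul, neg_add_eq_zero]
  exact Finset.sum_congr rfl fun j _ => by ring

end Stmt5Aux

/-- Inverse of a recognizable series with invertible constant coefficient
`a = (S,1) = c·b`: `S` is invertible in the convolution algebra and `S⁻¹` has the
representation `((−a⁻¹c, a⁻¹), [[A(I − b a⁻¹ c), A b a⁻¹],[0, 0]], (0; 1))` of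
dimension `n + 1`. -/
theorem stmt_5 {F σ : Type*} [Field F] {n : ℕ}
    (S : List σ → F)
    (c : Fin n → F) (A : σ → Matrix (Fin n) (Fin n) F) (b : Fin n → F)
    (ha : c ⬝ᵥ b ≠ 0)
    (hS : ∀ w : List σ, S w = c ⬝ᵥ ((w.map A).prod).mulVec b) :
    ∃ T : List σ → F,
      (∀ w : List σ, T w =
        Sum.elim (fun i => -(c ⬝ᵥ b)⁻¹ * c i) (fun _ : Fin 1 => (c ⬝ᵥ b)⁻¹) ⬝ᵥ
          ((w.map fun x =>
            Matrix.fromBlocks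
              (A x * (1 - Matrix.vecMulVec b (fun j => (c ⬝ᵥ b)⁻¹ * c j)))
              (Matrix.of fun i (_ : Fin 1) => ((A x).mulVec b) i * (c ⬝ᵥ b)⁻¹)
              0 0).prod).mulVec (Sum.elim 0 (fun _ : Fin 1 => 1))) ∧
      (∀ w : List σ, (∑ k ∈ Finset.range (w.length + 1), S (w.take k) * T (w.drop k)) =
        (match w with | [] => 1 | _ => 0)) ∧
      (∀ w : List σ, (∑ k ∈ Finset.range (w.length + 1), T (w.take k) * S (w.drop k)) =
        (match w with | [] => 1 | _ => 0)) := by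
  refine ⟨Stmt5Aux.Tf c A b, fun w => rfl, ?_, ?_⟩
  · intro w
    rcases List.eq_nil_or_concat w with rfl | ⟨w0, x, rfl⟩
    · simp only [List.length_nil, zero_add, Finset.range_one, Finset.sum_singleton,
        List.take_nil, List.drop_nil, Stmt5Aux.Tf_nil, hS, List.map_nil, List.prod_nil,
        Matrix.one_mulVec]
      exact mul_inv_cancel₀ ha
    · simp only [List.concat_eq_append, hS]
      rw [Stmt5Aux.conv_ST c A b ha w0 x]
      cases w0 <;> rfl
  · intro w
    rcases List.eq_nil_or_concat w with rfl | ⟨w0, x, rfl⟩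
    · simp only [List.length_nil, zero_add, Finset.range_one, Finset.sum_singleton,
        List.take_nil, List.drop_nil, Stmt5Aux.Tf_nil, hS, List.map_nil, List.prod_nil,
        Matrix.one_mulVec]
      exact inv_mul_cancel₀ ha
    · simp only [List.concat_eq_append, hS]
      rw [Stmt5Aux.conv_TS c A b ha, Stmt5Aux.Mprod_mulVec_zero c A b ha w0 x,
        dotProduct_zero, mul_zero]
      cases w0 <;> rfl
end

section
/- Let A be a simple ring with center the field F. For each k ≥ 0, if an element f of the (k+1)-fold tensor product A ⊗_F A ⊗_F ⋯ ⊗_F A (viewed as multilinear generalized polynomials a₀ y₀ a₁ y₁ ⋯ y_k a_{k+1} in noncommuting variables y₀,…,y_k) evaluates to zero for all substitutions of y₀,…,y_k by elements of A, then f = 0. -/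
open scoped TensorProduct

/-- For fixed parameters `b₀,…,b_k ∈ A`, the multilinear evaluation
`(a₀,…,a_{k+1}) ↦ a₀ b₀ a₁ b₁ ⋯ b_k a_{k+1}` of a multilinear generalized
polynomial. -/
noncomputable def evalGP (F A : Type*) [Field F] [Ring A] [Algebra F A]
    (k : ℕ) (b : Fin (k + 1) → A) :
    MultilinearMap F (fun _ : Fin (k + 2) => A) A :=
  (MultilinearMap.mkPiAlgebraFin F (k + 2) A).compLinearMap
    (fun i => if h : (i : ℕ) < k + 1 then LinearMap.mulRight F (b ⟨i, h⟩) else LinearMap.id)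

section Aux

variable {F A : Type*} [Field F] [Ring A] [Algebra F A]

/-- The interleaved product `a 0 * b 0 * a 1 * ⋯ * b (n-1) * a n`. -/
def gpProd (n : ℕ) (a : Fin (n + 1) → A) (b : Fin n → A) : A :=
  (List.ofFn fun i : Fin (n + 1) => if h : (i : ℕ) < n then a i * b ⟨i, h⟩ else a i).prod

lemma gpProd_zero (a : Fin 1 → A) (b : Fin 0 → A) : gpProd 0 a b = a 0 := by
  simp [gpProd]

lemma gpProd_succ (n : ℕ) (a : Fin (n + 2) → A) (b : Fin (n + 1) → A) :
    gpProd (n + 1) a b = a 0 * b 0 * gpProd n (Fin.tail a) (Fin.tail b) := by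
  rw [gpProd, List.ofFn_succ, List.prod_cons, gpProd]
  congr 1
  · refine congrArg List.prod (congrArg List.ofFn (funext fun i => ?_))
    rcases i with ⟨i, hi⟩
    by_cases h : i < n
    · rw [dif_pos h, dif_pos (by simpa using Nat.succ_lt_succ h)]
      rfl
    · rw [dif_neg h, dif_neg (by simpa using fun hh => h (Nat.lt_of_succ_lt_succ hh))]
      rfl

lemma lift_evalGP_tprod (k : ℕ) (b : Fin (k + 1) → A) (a : Fin (k + 2) → A) :
    PiTensorProduct.lift (evalGP F A k b) (PiTensorProduct.tprod F a) = gpProd (k + 1) a b := by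
  rw [PiTensorProduct.lift.tprod, evalGP, MultilinearMap.compLinearMap_apply,
    MultilinearMap.mkPiAlgebraFin_apply, gpProd]
  refine congrArg List.prod (congrArg List.ofFn (funext fun i => ?_))
  by_cases h : (i : ℕ) < k + 1
  · rw [dif_pos h, dif_pos h, LinearMap.mulRight_apply]
  · rw [dif_neg h, dif_neg h, LinearMap.id_apply]

variable [IsSimpleRing A]

/-- Key lemma: if `∑ i ∈ s, e i * y * x i = 0` for all `y`, with `e` linearly
independent over the center, then all `x i = 0`. -/
lemma key_lemma (hcentral : Subalgebra.center F A = ⊥)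
    {ι : Type*} {e : ι → A} (he : LinearIndependent F e) (s : Finset ι) :
    ∀ x : ι → A, (∀ y : A, ∑ i ∈ s, e i * y * x i = 0) → ∀ i ∈ s, x i = 0 := by
  classical
  induction s using Finset.strongInduction with
  | _ s ih =>
  intro x H i₀ hi₀
  by_contra h0
  set C : Set A :=
    {z | ∃ c : ι → A, (∀ y : A, ∑ i ∈ s, e i * y * c i = 0) ∧ c i₀ = z} with hC
  have zero_mem : (0 : A) ∈ C := ⟨0, by simp, rfl⟩
  have add_mem : ∀ {z w : A}, z ∈ C → w ∈ C → z + w ∈ C := by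
    rintro z w ⟨c1, h1, rfl⟩ ⟨c2, h2, rfl⟩
    refine ⟨c1 + c2, fun y => ?_, rfl⟩
    simp only [Pi.add_apply, mul_add, Finset.sum_add_distrib, h1 y, h2 y, add_zero]
  have neg_mem : ∀ {z : A}, z ∈ C → -z ∈ C := by
    rintro z ⟨c1, h1, rfl⟩
    refine ⟨-c1, fun y => ?_, rfl⟩
    simp only [Pi.neg_apply, mul_neg, Finset.sum_neg_distrib, h1 y, neg_zero]
  have mul_mem_left : ∀ {u z : A}, z ∈ C → u * z ∈ C := by
    rintro u z ⟨c1, h1, rfl⟩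
    refine ⟨fun i => u * c1 i, fun y => ?_, rfl⟩
    have := h1 (y * u)
    simp only [mul_assoc] at this ⊢
    exact this
  have mul_mem_right : ∀ {z u : A}, z ∈ C → z * u ∈ C := by
    rintro z u ⟨c1, h1, rfl⟩
    refine ⟨fun i => c1 i * u, fun y => ?_, rfl⟩
    have := congrArg (· * u) (h1 y)
    simp only [Finset.sum_mul, zero_mul, mul_assoc] at this ⊢
    exact this
  let I : TwoSidedIdeal A := TwoSidedIdeal.mk' C zero_mem add_mem neg_mem mul_mem_left mul_mem_right
  have hmem : ∀ z, z ∈ I ↔ z ∈ C := fun z =>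
    TwoSidedIdeal.mem_mk' C zero_mem add_mem neg_mem (fun {_ _} => mul_mem_left)
      (fun {_ _} => mul_mem_right) z
  have hxI : x i₀ ∈ I := (hmem _).mpr ⟨x, H, rfl⟩
  have hItop : I = ⊤ := by
    rcases eq_bot_or_eq_top I with h | h
    · rw [h, TwoSidedIdeal.mem_bot] at hxI
      exact absurd hxI h0
    · exact h
  have h1I : (1 : A) ∈ I := by rw [hItop]; exact TwoSidedIdeal.mem_top _
  obtain ⟨c, Hc, hc1⟩ := (hmem _).mp h1I
  -- every `c i`, `i ∈ s`, is central
  have hcomm : ∀ a : A, ∀ i ∈ s, a * c i = c i * a := by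
    intro a i hi
    by_cases hii : i = i₀
    · rw [hii, hc1, mul_one, one_mul]
    · have Herase : ∀ y : A,
          ∑ j ∈ s.erase i₀, e j * y * (a * c j - c j * a) = 0 := by
        intro y
        have h1 : ∑ j ∈ s, e j * y * (a * c j - c j * a) = 0 := by
          have ha : ∑ j ∈ s, e j * (y * a) * c j = 0 := Hc (y * a)
          have hb : (∑ j ∈ s, e j * y * c j) * a = 0 := by rw [Hc y, zero_mul]
          rw [Finset.sum_mul] at hb
          calc ∑ j ∈ s, e j * y * (a * c j - c j * a)
              = ∑ j ∈ s, (e j * (y * a) * c j - e j * y * c j * a) := by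
                apply Finset.sum_congr rfl
                intro j _
                simp only [mul_sub, mul_assoc]
            _ = (∑ j ∈ s, e j * (y * a) * c j) - ∑ j ∈ s, e j * y * c j * a := by
                rw [Finset.sum_sub_distrib]
            _ = 0 := by rw [ha, hb, sub_zero]
        have h2 : e i₀ * y * (a * c i₀ - c i₀ * a) = 0 := by
          rw [hc1, mul_one, one_mul, sub_self, mul_zero]
        calc ∑ j ∈ s.erase i₀, e j * y * (a * c j - c j * a)
            = (∑ j ∈ s, e j * y * (a * c j - c j * a)) - e i₀ * y * (a * c i₀ - c i₀ * a) := by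
              rw [← Finset.sum_erase_add s _ hi₀, add_sub_cancel_right]
          _ = 0 := by rw [h1, h2, sub_zero]
      have := ih (s.erase i₀) (Finset.erase_ssubset hi₀) (fun j => a * c j - c j * a)
        Herase i (Finset.mem_erase.mpr ⟨hii, hi⟩)
      exact sub_eq_zero.mp this
  have hcentr : ∀ i ∈ s, ∃ r : F, algebraMap F A r = c i := by
    intro i hi
    have : c i ∈ Subalgebra.center F A := Subalgebra.mem_center_iff.mpr fun a => by
      rw [← hcomm a i hi]
    rw [hcentral] at this
    exact this
  choose! r hr using hcentr
  have hsum : ∑ i ∈ s, r i • e i = 0 := by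
    have := Hc 1
    simp only [mul_one] at this
    calc ∑ i ∈ s, r i • e i = ∑ i ∈ s, e i * c i := by
          apply Finset.sum_congr rfl
          intro i hi
          rw [← hr i hi, Algebra.smul_def, Algebra.commutes]
      _ = 0 := this
  have := linearIndependent_iff'.mp he s r hsum i₀ hi₀
  have : c i₀ = 0 := by rw [← hr i₀ hi₀, this, map_zero]
  rw [hc1] at this
  exact one_ne_zero this

set_option maxHeartbeats 1000000 in
/-- Main independence lemma, by induction on the number of variables. -/
lemma indep_lemma (hcentral : Subalgebra.center F A = ⊥)
    {ι : Type*} {e : ι → A} (he : LinearIndependent F e) :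
    ∀ (n : ℕ) (s : Finset (Fin (n + 1) → ι)) (c : (Fin (n + 1) → ι) → F),
      (∀ b : Fin n → A, ∑ w ∈ s, c w • gpProd n (e ∘ w) b = 0) → ∀ w ∈ s, c w = 0 := by
  classical
  intro n
  induction n with
  | zero =>
    intro s c H w hw
    have hinj : Function.Injective (fun w : Fin 1 → ι => w 0) := by
      intro w1 w2 h
      funext i
      rw [Subsingleton.elim i 0]
      exact h
    refine linearIndependent_iff'.mp (he.comp _ hinj) s c ?_ w hw
    simpa [gpProd_zero] using H (fun i => i.elim0)
  | succ n IH =>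
    intro s c H w₀ hw₀
    set t := s.image (fun w => w 0) with ht
    have hx : ∀ b' : Fin n → A, ∀ j ∈ t,
        (∑ w ∈ s.filter (fun w => w 0 = j), c w • gpProd n (e ∘ Fin.tail w) b') = 0 := by
      intro b'
      refine key_lemma hcentral he t
        (fun j => ∑ w ∈ s.filter (fun w => w 0 = j), c w • gpProd n (e ∘ Fin.tail w) b')
        (fun y => ?_)
      have step : ∀ j ∈ t,
          e j * y * (∑ w ∈ s.filter (fun w => w 0 = j), c w • gpProd n (e ∘ Fin.tail w) b')
          = ∑ w ∈ s.filter (fun w => w 0 = j), c w • gpProd (n + 1) (e ∘ w) (Fin.cons y b') := by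
        intro j hj
        rw [Finset.mul_sum]
        apply Finset.sum_congr rfl
        intro w hw
        obtain ⟨hws, hwj⟩ := Finset.mem_filter.mp hw
        rw [gpProd_succ]
        have h1 : Fin.tail (e ∘ w) = e ∘ Fin.tail w := rfl
        have h2 : (e ∘ w) 0 = e j := by simp [hwj]
        rw [h1, h2, Fin.tail_cons, Fin.cons_zero, mul_smul_comm, mul_assoc]
      calc ∑ j ∈ t, e j * y * (∑ w ∈ s.filter (fun w => w 0 = j),
              c w • gpProd n (e ∘ Fin.tail w) b')
          = ∑ j ∈ t, ∑ w ∈ s.filter (fun w => w 0 = j),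
              c w • gpProd (n + 1) (e ∘ w) (Fin.cons y b') :=
            Finset.sum_congr rfl step
        _ = ∑ w ∈ s, c w • gpProd (n + 1) (e ∘ w) (Fin.cons y b') :=
            Finset.sum_fiberwise_of_maps_to (fun w hw => Finset.mem_image_of_mem _ hw) _
        _ = 0 := H (Fin.cons y b')
    set j₀ := w₀ 0 with hj₀def
    have hj₀ : j₀ ∈ t := Finset.mem_image_of_mem _ hw₀
    have hinj : ∀ w1 ∈ s.filter (fun w => w 0 = j₀), ∀ w2 ∈ s.filter (fun w => w 0 = j₀),
        Fin.tail w1 = Fin.tail w2 → w1 = w2 := by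
      intro w1 h1 w2 h2 htail
      obtain ⟨_, h1j⟩ := Finset.mem_filter.mp h1
      obtain ⟨_, h2j⟩ := Finset.mem_filter.mp h2
      rw [← Fin.cons_self_tail w1, ← Fin.cons_self_tail w2, h1j, h2j, htail]
    have hfib : ∀ b' : Fin n → A,
        ∑ w' ∈ (s.filter (fun w => w 0 = j₀)).image Fin.tail,
          c (Fin.cons j₀ w') • gpProd n (e ∘ w') b' = 0 := by
      intro b'
      rw [Finset.sum_image hinj]
      rw [← hx b' j₀ hj₀]
      apply Finset.sum_congr rfl
      intro w hw
      obtain ⟨_, hwj⟩ := Finset.mem_filter.mp hw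
      rw [← hwj, Fin.cons_self_tail]
    have hmem : Fin.tail w₀ ∈ (s.filter (fun w => w 0 = j₀)).image Fin.tail :=
      Finset.mem_image_of_mem _ (Finset.mem_filter.mpr ⟨hw₀, rfl⟩)
    have hres := IH ((s.filter (fun w => w 0 = j₀)).image Fin.tail)
      (fun w' => c (Fin.cons j₀ w')) hfib (Fin.tail w₀) hmem
    simpa [hj₀def, Fin.cons_self_tail] using hres

end Aux

set_option maxHeartbeats 1000000 in
/-- If a multilinear generalized polynomial `f ∈ A^{⊗(k+2)}` over a simple ring
`A` with center `F` evaluates to zero for all substitutions of `y₀,…,y_k` by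
elements of `A`, then `f = 0`. -/
theorem stmt_11 (F A : Type*) [Field F] [Ring A] [Algebra F A]
    [IsSimpleRing A] (hcentral : Subalgebra.center F A = ⊥) (k : ℕ)
    (f : ⨂[F] (_ : Fin (k + 2)), A)
    (hf : ∀ b : Fin (k + 1) → A, PiTensorProduct.lift (evalGP F A k b) f = 0) :
    f = 0 := by
  classical
  set e := Module.Basis.ofVectorSpace F A with he_def
  have hspan : f ∈ Submodule.span F
      (Set.range fun w : Fin (k + 2) → Module.Basis.ofVectorSpaceIndex F A =>
        PiTensorProduct.tprod F fun i => e (w i)) := by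
    have hpure : ∀ a : Fin (k + 2) → A, PiTensorProduct.tprod F a ∈ Submodule.span F
        (Set.range fun w : Fin (k + 2) → Module.Basis.ofVectorSpaceIndex F A =>
          PiTensorProduct.tprod F fun i => e (w i)) := by
      intro a
      have ha : a = fun i => ∑ j ∈ (e.repr (a i)).support, e.repr (a i) j • e j := by
        funext i
        have h := e.linearCombination_repr (a i)
        rw [Finsupp.linearCombination_apply, Finsupp.sum] at h
        exact h.symm
      rw [ha, MultilinearMap.map_sum_finset (PiTensorProduct.tprod F)
        (fun i j => e.repr (a i) j • e j) (fun i => (e.repr (a i)).support)]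
      refine Submodule.sum_mem _ fun r _ => ?_
      rw [(PiTensorProduct.tprod F).map_smul_univ]
      exact Submodule.smul_mem _ _ (Submodule.subset_span ⟨r, rfl⟩)
    clear hf
    induction f using PiTensorProduct.induction_on with
    | smul_tprod r a => exact Submodule.smul_mem _ _ (hpure a)
    | add x y hx hy => exact Submodule.add_mem _ hx hy
  obtain ⟨c, hc⟩ := Finsupp.mem_span_range_iff_exists_finsupp.mp hspan
  have Hz : ∀ w ∈ c.support, c w = 0 := by
    refine indep_lemma hcentral e.linearIndependent (k + 1) c.support c fun b => ?_
    have h0 := hf b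
    rw [← hc, Finsupp.sum, map_sum] at h0
    calc ∑ w ∈ c.support, c w • gpProd (k + 1) (e ∘ w) b
        = ∑ w ∈ c.support, PiTensorProduct.lift (evalGP F A k b)
            (c w • PiTensorProduct.tprod F fun i => e (w i)) := by
          apply Finset.sum_congr rfl
          intro w _
          rw [map_smul, lift_evalGP_tprod]
          rfl
      _ = 0 := h0
  have hc0 : c = 0 := by
    ext w
    by_cases h : w ∈ c.support
    · exact Hz w h
    · simpa using Finsupp.notMem_support_iff.mp h
  rw [← hc, hc0, Finsupp.sum_zero_index]
end

section
/- Let f be a generalized polynomial over M_m(F) of degree h (an element of the free product M_m(F) * F⟨x₁,…,x_g⟩ with all words of length ≤ h), where F has characteristic 0. If f vanishes on all g-tuples of matrices of size m·⌈(h+1)/2⌉ (under the embedding a ↦ I_s ⊗ a of coefficients), then f = 0. -/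
open scoped TensorProduct Kronecker

/-- The embedding `M_m(F) → M_{ms}(F)`, `a ↦ I_s ⊗ a`, as a linear map. -/
def incl (F : Type*) [Field F] (m s : ℕ) :
    Matrix (Fin m) (Fin m) F →ₗ[F] Matrix (Fin s × Fin m) (Fin s × Fin m) F where
  toFun a := (1 : Matrix (Fin s) (Fin s) F) ⊗ₖ a
  map_add' a b := by
    ext ⟨i, i'⟩ ⟨j, j'⟩
    simp [Matrix.kroneckerMap, mul_add]
  map_smul' r a := by
    ext ⟨i, i'⟩ ⟨j, j'⟩
    simp [Matrix.kroneckerMap, smul_eq_mul]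
    ring

/-- Evaluation of the homogeneous component of a generalized polynomial attached
to the word `w = x_{w 0} ⋯ x_{w (ℓ-1)}` at the tuple `p` of matrices of size
`m·s`: the multilinear map `(a₀,…,a_ℓ) ↦ ι(a₀) p_{w 0} ι(a₁) ⋯ p_{w (ℓ-1)} ι(a_ℓ)`. -/
noncomputable def evalWord (F : Type*) [Field F] (m s g : ℕ)
    (p : Fin g → Matrix (Fin s × Fin m) (Fin s × Fin m) F) {ℓ : ℕ} (w : Fin ℓ → Fin g) :
    MultilinearMap F (fun _ : Fin (ℓ + 1) => Matrix (Fin m) (Fin m) F)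
      (Matrix (Fin s × Fin m) (Fin s × Fin m) F) :=
  (MultilinearMap.mkPiAlgebraFin F (ℓ + 1) _).compLinearMap
    (fun i => if h : (i : ℕ) < ℓ then
        (LinearMap.mulRight F (p (w ⟨i, h⟩))).comp (incl F m s)
      else incl F m s)

section Aux

variable {F : Type*} [Field F] {m s : ℕ}

local notation "Mm" => Matrix (Fin m) (Fin m) F
local notation "Ms" => Matrix (Fin s × Fin m) (Fin s × Fin m) F

/-- sandwich multilinear map `a ↦ a₀ c₀ a₁ c₁ ⋯ c_{n-1} a_n` -/
noncomputable def sandwich {n : ℕ} (c : Fin n → Mm) :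
    MultilinearMap F (fun _ : Fin (n + 1) => Mm) Mm :=
  (MultilinearMap.mkPiAlgebraFin F (n + 1) _).compLinearMap
    (fun i => if h : (i : ℕ) < n then LinearMap.mulRight F (c ⟨i, h⟩) else LinearMap.id)

lemma sandwich_apply {n : ℕ} (c : Fin n → Mm) (a : Fin (n + 1) → Mm) :
    sandwich c a =
      (List.ofFn fun i : Fin (n + 1) =>
        if h : (i : ℕ) < n then a i * c ⟨i, h⟩ else a i).prod := by
  simp only [sandwich, MultilinearMap.compLinearMap_apply, MultilinearMap.mkPiAlgebraFin_apply]
  refine congrArg List.prod (congrArg List.ofFn (funext fun i => ?_))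
  by_cases h : (i : ℕ) < n <;> simp [h]

lemma sandwich_zero (c : Fin 0 → Mm) (a : Fin 1 → Mm) : sandwich c a = a 0 := by
  simp [sandwich_apply]

lemma sandwich_succ {n : ℕ} (c : Fin (n + 1) → Mm) (a : Fin (n + 2) → Mm) :
    sandwich c a = (a 0 * c 0) * sandwich (fun i => c i.succ) (fun i => a i.succ) := by
  rw [sandwich_apply, sandwich_apply, List.ofFn_succ, List.prod_cons]
  congr 1
  · simp

lemma mul_stdBasis_mul_entry (A : Mm) (x y : Fin m) (S : Mm) (p q : Fin m) :
    ((A * Matrix.single x y (1 : F)) * S) p q = A p x * S y q := by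
  rw [Matrix.mul_apply, Finset.sum_eq_single y]
  · rw [Matrix.mul_single_apply_same, mul_one]
  · intro b _ hb
    rw [Matrix.mul_single_apply_of_ne _ _ _ _ _ hb, zero_mul]
  · simp

lemma sandwich_entry : ∀ (n : ℕ) (a : Fin (n + 1) → Mm) (idx : Fin (n + 1) → Fin m × Fin m),
    sandwich (fun i : Fin n => Matrix.single (idx i.castSucc).2 (idx i.succ).1 (1 : F)) a
        (idx 0).1 (idx (Fin.last n)).2 =
      ∏ i, a i (idx i).1 (idx i).2 := by
  intro n
  induction n with
  | zero =>
    intro a idx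
    rw [sandwich_zero]
    simp
  | succ n ih =>
    intro a idx
    rw [sandwich_succ, Fin.prod_univ_succ,
      show ((0 : Fin (n + 1)).castSucc) = (0 : Fin (n + 2)) from rfl, mul_stdBasis_mul_entry]
    have key := ih (fun i => a i.succ) (idx ∘ Fin.succ)
    simp only [Function.comp_apply, Fin.succ_castSucc, Fin.succ_last] at key
    congr 1

lemma matrix_decomp (A : Mm) :
    A = ∑ rc : Fin m × Fin m, A rc.1 rc.2 • Matrix.single rc.1 rc.2 (1 : F) := by
  conv_lhs => rw [Matrix.matrix_eq_sum_single A]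
  rw [Fintype.sum_prod_type]
  congr 1
  funext i
  congr 1
  funext j
  rw [Matrix.smul_single, smul_eq_mul, mul_one]

lemma tensor_eq_sum {n : ℕ} (t : ⨂[F] (_ : Fin (n + 1)), Mm) :
    t = ∑ idx : Fin (n + 1) → Fin m × Fin m,
      (PiTensorProduct.lift (sandwich (fun i : Fin n =>
          Matrix.single (idx i.castSucc).2 (idx i.succ).1 (1 : F))) t (idx 0).1
          (idx (Fin.last n)).2) •
        PiTensorProduct.tprod F (fun i => Matrix.single (idx i).1 (idx i).2 (1 : F)) := by
  induction t using PiTensorProduct.induction_on with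
  | smul_tprod r a =>
    simp only [map_smul, Matrix.smul_apply, smul_eq_mul, mul_smul]
    rw [← Finset.smul_sum]
    congr 1
    have expand : PiTensorProduct.tprod F a =
        PiTensorProduct.tprod F (fun i => ∑ rc : Fin m × Fin m,
          a i rc.1 rc.2 • Matrix.single rc.1 rc.2 (1 : F)) := by
      congr 1
      funext i
      exact matrix_decomp (a i)
    conv_lhs => rw [expand]
    rw [MultilinearMap.map_sum]
    refine Finset.sum_congr rfl fun idx _ => ?_
    rw [MultilinearMap.map_smul_univ, PiTensorProduct.lift.tprod, sandwich_entry]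
  | add x y hx hy =>
    conv_lhs => rw [hx, hy]
    rw [← Finset.sum_add_distrib]
    refine Finset.sum_congr rfl fun idx _ => ?_
    simp only [map_add, Matrix.add_apply, add_smul]

lemma sandwich_inj {n : ℕ} (t : ⨂[F] (_ : Fin (n + 1)), Mm)
    (h : ∀ c : Fin n → Mm, PiTensorProduct.lift (sandwich c) t = 0) : t = 0 := by
  rw [tensor_eq_sum t]
  simp [h]

@[simp] lemma incl_apply (a : Mm) :
    incl F m s a = (1 : Matrix (Fin s) (Fin s) F) ⊗ₖ a := rfl

noncomputable def evalGen {n : ℕ} (q : Fin n → Ms) :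
    MultilinearMap F (fun _ : Fin (n + 1) => Mm) Ms :=
  (MultilinearMap.mkPiAlgebraFin F (n + 1) _).compLinearMap
    (fun i => if h : (i : ℕ) < n then
        (LinearMap.mulRight F (q ⟨i, h⟩)).comp (incl F m s)
      else incl F m s)

lemma evalGen_apply {n : ℕ} (q : Fin n → Ms) (a : Fin (n + 1) → Mm) :
    evalGen q a =
      (List.ofFn fun i : Fin (n + 1) =>
        if h : (i : ℕ) < n then ((1 : Matrix (Fin s) (Fin s) F) ⊗ₖ a i) * q ⟨i, h⟩
        else (1 : Matrix (Fin s) (Fin s) F) ⊗ₖ a i).prod := by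
  simp only [evalGen, MultilinearMap.compLinearMap_apply, MultilinearMap.mkPiAlgebraFin_apply]
  refine congrArg List.prod (congrArg List.ofFn (funext fun i => ?_))
  by_cases h : (i : ℕ) < n <;> simp [h]

lemma evalGen_zero (q : Fin 0 → Ms) (a : Fin 1 → Mm) :
    evalGen q a = (1 : Matrix (Fin s) (Fin s) F) ⊗ₖ a 0 := by
  simp [evalGen_apply]

lemma evalGen_succ {n : ℕ} (q : Fin (n + 1) → Ms) (a : Fin (n + 2) → Mm) :
    evalGen q a = (((1 : Matrix (Fin s) (Fin s) F) ⊗ₖ a 0) * q 0) *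
      evalGen (fun i => q i.succ) (fun i => a i.succ) := by
  rw [evalGen_apply, evalGen_apply, List.ofFn_succ, List.prod_cons]
  congr 1
  · simp

lemma list_update {n : ℕ} [DecidableEq (Fin n)] (q : Fin n → Ms) (j : Fin n) (z : Ms)
    (a : Fin (n + 1) → Mm) :
    (List.ofFn fun i : Fin (n + 1) =>
        if h : (i : ℕ) < n then
          ((1 : Matrix (Fin s) (Fin s) F) ⊗ₖ a i) * (Function.update q j z) ⟨i, h⟩
        else (1 : Matrix (Fin s) (Fin s) F) ⊗ₖ a i) =
      (List.ofFn fun i : Fin (n + 1) =>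
        if h : (i : ℕ) < n then ((1 : Matrix (Fin s) (Fin s) F) ⊗ₖ a i) * q ⟨i, h⟩
        else (1 : Matrix (Fin s) (Fin s) F) ⊗ₖ a i).set j
        (((1 : Matrix (Fin s) (Fin s) F) ⊗ₖ a j.castSucc) * z) := by
  apply List.ext_getElem
  · simp
  intro k h1 h2
  simp only [List.getElem_ofFn, List.getElem_set]
  by_cases hkj : (j : ℕ) = k
  · rw [if_pos hkj]
    have hk : k < n := hkj ▸ j.isLt
    rw [dif_pos hk]
    have hjk : (⟨k, hk⟩ : Fin n) = j := Fin.ext hkj.symm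
    rw [hjk, Function.update_self]
    have : (⟨k, Nat.lt_succ_of_lt hk⟩ : Fin (n + 1)) = j.castSucc := Fin.ext hkj.symm
    exact congrArg (fun u => ((1 : Matrix (Fin s) (Fin s) F) ⊗ₖ a u) * z) this
  · rw [if_neg hkj]
    by_cases hk : k < n
    · rw [dif_pos hk, dif_pos hk, Function.update_of_ne (Fin.ne_of_val_ne (fun hh => hkj (hh ▸ rfl)))]
    · rw [dif_neg hk, dif_neg hk]

lemma evalGen_update_add {n : ℕ} [DecidableEq (Fin n)] (q : Fin n → Ms) (j : Fin n) (x y : Ms) :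
    evalGen (Function.update q j (x + y)) =
      evalGen (Function.update q j x) + evalGen (Function.update q j y) := by
  apply MultilinearMap.ext
  intro a
  simp only [MultilinearMap.add_apply, evalGen_apply]
  rw [list_update, list_update, list_update, List.prod_set, List.prod_set, List.prod_set]
  simp only [List.length_ofFn, Nat.lt_succ_of_lt j.isLt, if_true]
  simp only [mul_add, add_mul]

lemma evalGen_update_smul {n : ℕ} [DecidableEq (Fin n)] (q : Fin n → Ms) (j : Fin n) (r : F)
    (x : Ms) :
    evalGen (Function.update q j (r • x)) = r • evalGen (Function.update q j x) := by
  apply MultilinearMap.ext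
  intro a
  simp only [MultilinearMap.smul_apply, evalGen_apply]
  rw [list_update, list_update, List.prod_set, List.prod_set]
  simp only [List.length_ofFn, Nat.lt_succ_of_lt j.isLt, if_true]
  simp only [mul_smul_comm, smul_mul_assoc]

noncomputable def evalQ {n : ℕ} (f : ⨂[F] (_ : Fin (n + 1)), Mm) :
    MultilinearMap F (fun _ : Fin n => Ms) Ms where
  toFun q := PiTensorProduct.lift (evalGen q) f
  map_update_add' q j x y := by
    rw [evalGen_update_add, map_add, LinearMap.add_apply]
  map_update_smul' q j r x := by
    rw [evalGen_update_smul, map_smul, LinearMap.smul_apply]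

lemma evalQ_apply {n : ℕ} (f : ⨂[F] (_ : Fin (n + 1)), Mm) (q : Fin n → Ms) :
    evalQ f q = PiTensorProduct.lift (evalGen q) f := rfl

/-- staircase-type ordered products -/
noncomputable def eprod {n : ℕ} (E : Fin n → Matrix (Fin s) (Fin s) F) :
    Matrix (Fin s) (Fin s) F :=
  (List.ofFn fun i : Fin (n + 1) => if h : (i : ℕ) < n then E ⟨i, h⟩ else 1).prod

lemma eprod_zero (E : Fin 0 → Matrix (Fin s) (Fin s) F) : eprod E = 1 := by
  simp [eprod]

lemma eprod_succ {n : ℕ} (E : Fin (n + 1) → Matrix (Fin s) (Fin s) F) :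
    eprod E = E 0 * eprod (fun i => E i.succ) := by
  rw [eprod, eprod, List.ofFn_succ, List.prod_cons]
  congr 1
  · simp

lemma evalGen_kron {n : ℕ} (E : Fin n → Matrix (Fin s) (Fin s) F) (c : Fin n → Mm)
    (a : Fin (n + 1) → Mm) :
    evalGen (fun i => E i ⊗ₖ c i) a = eprod E ⊗ₖ sandwich c a := by
  induction n with
  | zero =>
    rw [evalGen_zero, eprod_zero, sandwich_zero]
  | succ n ih =>
    rw [evalGen_succ, eprod_succ, sandwich_succ, ih, ← Matrix.mul_kronecker_mul,
      ← Matrix.mul_kronecker_mul, one_mul]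

lemma lift_evalGen_kron {n : ℕ} (E : Fin n → Matrix (Fin s) (Fin s) F) (c : Fin n → Mm)
    (f : ⨂[F] (_ : Fin (n + 1)), Mm) :
    PiTensorProduct.lift (evalGen (fun i => E i ⊗ₖ c i)) f =
      eprod E ⊗ₖ PiTensorProduct.lift (sandwich c) f := by
  induction f using PiTensorProduct.induction_on with
  | smul_tprod r a =>
    simp only [map_smul, PiTensorProduct.lift.tprod]
    rw [evalGen_kron, Matrix.kronecker_smul]
  | add x y hx hy =>
    simp only [map_add, hx, hy, Matrix.kronecker_add]

lemma eprod_entry_one {n : ℕ} (hn : n = 0) (E : Fin n → Matrix (Fin s) (Fin s) F)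
    (a b : Fin s) (hab : a = b) : eprod E a b = 1 := by
  subst hn
  rw [eprod_zero, hab]
  exact Matrix.one_apply_eq b

lemma eprod_chain : ∀ (n : ℕ) (u v : Fin n → Fin s)
    (_ : ∀ (i : ℕ) (h1 : i + 1 < n), v ⟨i, by omega⟩ = u ⟨i + 1, h1⟩) (hn : 0 < n),
    eprod (fun i => Matrix.single (u i) (v i) (1 : F)) =
      Matrix.single (u ⟨0, hn⟩) (v ⟨n - 1, by omega⟩) 1 := by
  intro n
  induction n with
  | zero => omega
  | succ n ih =>
    intro u v hch hn
    rcases Nat.eq_zero_or_pos n with rfl | hpos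
    · rw [eprod_succ, eprod_zero, mul_one]
      rfl
    · rw [eprod_succ]
      have := ih (fun i => u i.succ) (fun i => v i.succ)
        (fun i h1 => by
          have := hch (i + 1) (by omega)
          simpa using this) hpos
      rw [show (fun i : Fin n => Matrix.single (u i.succ) (v i.succ) (1 : F)) =
          (fun i : Fin n =>
            Matrix.single ((fun k => u k.succ) i) ((fun k => v k.succ) i) (1 : F))
          from rfl, this]
      have h0 : v 0 = u ⟨(0 : ℕ) + 1, by omega⟩ := hch 0 (by omega)
      have e1 : ((⟨0, hpos⟩ : Fin n).succ) = ⟨(0 : ℕ) + 1, by omega⟩ := rfl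
      rw [e1, ← h0, Matrix.single_mul_single_same, one_mul]
      have e2 : (⟨n - 1, by omega⟩ : Fin n).succ = (⟨n + 1 - 1, by omega⟩ : Fin (n + 1)) :=
        Fin.ext (by simp [Fin.val_succ]; omega)
      rw [e2]
      rfl

lemma eprod_break : ∀ (n : ℕ) (u v : Fin n → Fin s) (i0 : ℕ) (h1 : i0 + 1 < n)
    (_ : v ⟨i0, by omega⟩ ≠ u ⟨i0 + 1, h1⟩),
    eprod (fun i => Matrix.single (u i) (v i) (1 : F)) = 0 := by
  intro n
  induction n with
  | zero => omega
  | succ n ih =>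
    intro u v i0 h1 hbr
    rcases Nat.eq_zero_or_pos i0 with rfl | hpos
    · -- break at front
      obtain ⟨n, rfl⟩ : ∃ k, n = k + 1 := ⟨n - 1, by omega⟩
      rw [eprod_succ, eprod_succ, ← mul_assoc]
      rw [show ((0 : Fin (n + 1)).succ) = ⟨0 + 1, h1⟩ from rfl]
      have hbr' : v 0 ≠ u ⟨0 + 1, h1⟩ := hbr
      rw [Matrix.single_mul_single_of_ne (h := hbr'), zero_mul]
    · rw [eprod_succ]
      have := ih (fun i => u i.succ) (fun i => v i.succ) (i0 - 1) (by omega)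
        (by
          intro hc
          apply hbr
          have e1 : ((⟨i0 - 1, by omega⟩ : Fin n).succ) = (⟨i0, by omega⟩ : Fin (n + 1)) :=
            Fin.ext (by simp [Fin.val_succ]; omega)
          have e2 : ((⟨i0 - 1 + 1, by omega⟩ : Fin n).succ) = (⟨i0 + 1, h1⟩ : Fin (n + 1)) :=
            Fin.ext (by simp [Fin.val_succ]; omega)
          rw [← e1, ← e2]
          exact hc)
      rw [show (fun i : Fin n => Matrix.single (u i.succ) (v i.succ) (1 : F)) =
          (fun i : Fin n =>
            Matrix.single ((fun k => u k.succ) i) ((fun k => v k.succ) i) (1 : F))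
          from rfl, this, mul_zero]

lemma stair_unique {n : ℕ} (r : Fin n → Fin n) (hbij : Function.Bijective r)
    (hch : ∀ (i : ℕ) (h1 : i + 1 < n),
      ((r ⟨i, by omega⟩ : ℕ) + 1) / 2 = ((r ⟨i + 1, h1⟩ : ℕ)) / 2) :
    ∀ k : Fin n, r k = k := by
  intro k0
  rcases k0 with ⟨k, hk⟩
  induction k using Nat.strong_induction_on with
  | _ k IH =>
    obtain ⟨pos, hpos⟩ := hbij.2 ⟨k, hk⟩
    have hposval : ((r pos : Fin n) : ℕ) = k := congrArg Fin.val hpos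
    have hposk : k ≤ (pos : ℕ) := by
      by_contra hcon
      push_neg at hcon
      have h2 := congrArg Fin.val (IH (pos : ℕ) hcon pos.isLt)
      simp only [Fin.eta] at h2
      omega
    rcases Nat.eq_or_lt_of_le hposk with heq | hklt
    · conv_lhs => rw [show (⟨k, hk⟩ : Fin n) = pos from Fin.ext heq]
      exact hpos
    · exfalso
      have hpm : (pos : ℕ) - 1 + 1 < n := by have := pos.isLt; omega
      have hpm' : (pos : ℕ) - 1 < n := by omega
      have e1 : (⟨(pos : ℕ) - 1 + 1, hpm⟩ : Fin n) = pos := Fin.ext (by simp; omega)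
      have hch1 : ((r ⟨(pos : ℕ) - 1, hpm'⟩ : ℕ) + 1) / 2 =
          ((r ⟨(pos : ℕ) - 1 + 1, hpm⟩ : ℕ)) / 2 := hch _ hpm
      rw [e1, hpos] at hch1
      have hval : ((⟨k, hk⟩ : Fin n) : ℕ) = k := rfl
      rw [hval] at hch1
      have hx1 : (r ⟨(pos : ℕ) - 1, hpm'⟩ : ℕ) ≠ k := by
        intro hxy
        have hrr : r ⟨(pos : ℕ) - 1, hpm'⟩ = r pos := by
          rw [hpos]
          exact Fin.ext hxy
        have h5 := congrArg Fin.val (hbij.1 hrr)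
        simp only [Fin.val_mk] at h5
        omega
      have hx2 : ¬((r ⟨(pos : ℕ) - 1, hpm'⟩ : ℕ) < k) := by
        intro hxy
        have hxn : (r ⟨(pos : ℕ) - 1, hpm'⟩ : ℕ) < n := (r ⟨(pos : ℕ) - 1, hpm'⟩).isLt
        have hr := IH _ hxy hxn
        have hrr : r ⟨(r ⟨(pos : ℕ) - 1, hpm'⟩ : ℕ), hxn⟩ = r ⟨(pos : ℕ) - 1, hpm'⟩ := by
          rw [hr]
        have h5 := congrArg Fin.val (hbij.1 hrr)
        simp only [Fin.val_mk] at h5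
        omega
      omega


lemma prodX {σ : Type*} {β : Type*} (t : Finset β) (gg : β → σ) :
    (∏ b ∈ t, (MvPolynomial.X (gg b) : MvPolynomial σ F)) =
      MvPolynomial.monomial (∑ b ∈ t, Finsupp.single (gg b) 1) (1 : F) := by
  rw [MvPolynomial.monomial_sum_one]
  rfl

lemma condBij {n ℓ : ℕ} (r : Fin n → Fin ℓ)
    (hc : (∑ pos : Fin n, Finsupp.single (r pos) (1 : ℕ)) =
      ∑ j : Fin ℓ, Finsupp.single j (1 : ℕ)) : Function.Bijective r := by
  rw [Function.bijective_iff_existsUnique]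
  intro k
  have happ := congrArg (fun d => d k) hc
  simp only [Finsupp.finset_sum_apply, Finsupp.single_apply] at happ
  -- happ : ∑ pos, (if r pos = k then 1 else 0) = ∑ j, (if j = k then 1 else 0)
  rw [Finset.sum_ite_eq' Finset.univ k (fun _ => (1 : ℕ))] at happ
  simp only [Finset.mem_univ, if_true] at happ
  have hcard : (Finset.univ.filter (fun x => r x = k)).card = 1 := by
    rw [Finset.card_filter]
    simpa using happ
  obtain ⟨a, ha⟩ := Finset.card_eq_one.mp hcard
  refine ⟨a, ?_, ?_⟩
  · have : a ∈ Finset.univ.filter (fun x => r x = k) := ha ▸ Finset.mem_singleton_self a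
    exact (Finset.mem_filter.mp this).2
  · intro b hb
    have : b ∈ Finset.univ.filter (fun x => r x = k) :=
      Finset.mem_filter.mpr ⟨Finset.mem_univ b, hb⟩
    rw [ha] at this
    exact Finset.mem_singleton.mp this

end Aux


/-- A generalized polynomial over `M_m(F)` of degree `h` (given by its tensor
coefficients for each word of length `ℓ ≤ h`) that vanishes on all `g`-tuples of
matrices of size `m·⌈(h+1)/2⌉` is zero. -/
theorem stmt_12 (F : Type*) [Field F] [CharZero F] (m g h : ℕ) (hm : 0 < m)
    (f : (ℓ : Fin (h + 1)) → (Fin ℓ → Fin g) →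
      ⨂[F] (_ : Fin ((ℓ : ℕ) + 1)), Matrix (Fin m) (Fin m) F)
    (hvan : ∀ p : Fin g → Matrix (Fin ((h + 2) / 2) × Fin m) (Fin ((h + 2) / 2) × Fin m) F,
      ∑ ℓ : Fin (h + 1), ∑ w : Fin ℓ → Fin g,
        PiTensorProduct.lift (evalWord F m ((h + 2) / 2) g p w) (f ℓ w) = 0) :
    ∀ (ℓ : Fin (h + 1)) (w : Fin ℓ → Fin g), f ℓ w = 0 := by
  intro ℓ w
  apply sandwich_inj
  intro c
  -- the staircase data
  set u : Fin (ℓ : ℕ) → Fin ((h + 2) / 2) :=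
    fun j => ⟨(j : ℕ) / 2, by have h1 := j.isLt; have h2 := ℓ.isLt; omega⟩ with hu
  set v : Fin (ℓ : ℕ) → Fin ((h + 2) / 2) :=
    fun j => ⟨((j : ℕ) + 1) / 2, by have h1 := j.isLt; have h2 := ℓ.isLt; omega⟩ with hv
  set EE : Fin (ℓ : ℕ) → Matrix (Fin ((h + 2) / 2) × Fin m) (Fin ((h + 2) / 2) × Fin m) F :=
    fun j => Matrix.single (u j) (v j) (1 : F) ⊗ₖ c j with hEE
  -- Step A: expansion of the vanishing identity after substitution
  have expand : ∀ t : Fin (ℓ : ℕ) → F,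
      ∑ ℓ' : Fin (h + 1), ∑ w' : Fin (ℓ' : ℕ) → Fin g, ∑ r : Fin (ℓ' : ℕ) → Fin (ℓ : ℕ),
        (∏ pos, t (r pos)) •
          evalQ (f ℓ' w') (fun pos => if w (r pos) = w' pos then EE (r pos) else 0) = 0 := by
    intro t
    have h0 := hvan (fun i => ∑ j : Fin (ℓ : ℕ), t j • (if w j = i then EE j else 0))
    refine Eq.trans ?_ h0
    refine Finset.sum_congr rfl fun ℓ' _ => Finset.sum_congr rfl fun w' _ => ?_
    have e1 : PiTensorProduct.lift
        (evalWord F m ((h + 2) / 2) g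
          (fun i => ∑ j : Fin (ℓ : ℕ), t j • (if w j = i then EE j else 0)) w') (f ℓ' w') =
        evalQ (f ℓ' w')
          (fun pos => ∑ j : Fin (ℓ : ℕ), t j • (if w j = w' pos then EE j else 0)) := rfl
    rw [e1, MultilinearMap.map_sum]
    refine Finset.sum_congr rfl fun r _ => ?_
    rw [← MultilinearMap.map_smul_univ]
  -- Step B: extract the multilinear coefficient
  have coeffEq : ∀ uv1 uv2 : Fin ((h + 2) / 2) × Fin m,
      ∑ ℓ' : Fin (h + 1), ∑ w' : Fin (ℓ' : ℕ) → Fin g, ∑ r : Fin (ℓ' : ℕ) → Fin (ℓ : ℕ),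
        (if (∑ pos : Fin (ℓ' : ℕ), Finsupp.single (r pos) (1 : ℕ)) =
            ∑ j : Fin (ℓ : ℕ), Finsupp.single j (1 : ℕ) then
          (evalQ (f ℓ' w') (fun pos => if w (r pos) = w' pos then EE (r pos) else 0)) uv1 uv2
        else 0) = 0 := by
    intro uv1 uv2
    have hP0 : (∑ ℓ' : Fin (h + 1), ∑ w' : Fin (ℓ' : ℕ) → Fin g,
        ∑ r : Fin (ℓ' : ℕ) → Fin (ℓ : ℕ),
          (∏ pos, MvPolynomial.X (r pos) : MvPolynomial (Fin (ℓ : ℕ)) F) *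
            MvPolynomial.C
              ((evalQ (f ℓ' w')
                (fun pos => if w (r pos) = w' pos then EE (r pos) else 0)) uv1 uv2)) = 0 := by
      apply MvPolynomial.funext
      intro t
      rw [map_zero]
      have hexp := congrArg (fun A => A uv1 uv2) (expand t)
      simp only [Matrix.sum_apply, Matrix.smul_apply, smul_eq_mul] at hexp
      rw [map_sum]
      refine Eq.trans (Finset.sum_congr rfl fun ℓ' _ => ?_) hexp
      rw [map_sum]
      refine Finset.sum_congr rfl fun w' _ => ?_
      rw [map_sum]
      refine Finset.sum_congr rfl fun r _ => ?_
      rw [map_mul, MvPolynomial.eval_C, map_prod]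
      simp only [MvPolynomial.eval_X]
    have hco := congrArg
      (MvPolynomial.coeff (∑ j : Fin (ℓ : ℕ), Finsupp.single j (1 : ℕ))) hP0
    rw [MvPolynomial.coeff_zero] at hco
    refine Eq.trans ?_ hco
    rw [MvPolynomial.coeff_sum]
    refine Finset.sum_congr rfl fun ℓ' _ => ?_
    rw [MvPolynomial.coeff_sum]
    refine Finset.sum_congr rfl fun w' _ => ?_
    rw [MvPolynomial.coeff_sum]
    refine Finset.sum_congr rfl fun r _ => ?_
    rw [prodX Finset.univ r, mul_comm, MvPolynomial.coeff_C_mul, MvPolynomial.coeff_monomial,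
      mul_ite, mul_one, mul_zero]
  -- Step C: prune the sum down to the single surviving term
  have prune : ∀ uv1 uv2 : Fin ((h + 2) / 2) × Fin m,
      (evalQ (f ℓ w) (fun pos => EE pos)) uv1 uv2 = 0 := by
    intro uv1 uv2
    have h0 := coeffEq uv1 uv2
    rw [Finset.sum_eq_single_of_mem ℓ (Finset.mem_univ ℓ) ?hout] at h0
    case hout =>
      intro b _ hb
      refine Finset.sum_eq_zero fun w' _ => Finset.sum_eq_zero fun r _ => ?_
      rw [if_neg]
      intro hcond
      have hbij := condBij r hcond
      have hcard : (b : ℕ) = (ℓ : ℕ) := by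
        have := Fintype.card_of_bijective hbij
        simpa using this
      exact hb (Fin.ext hcard)
    rw [Finset.sum_eq_single_of_mem w (Finset.mem_univ w) ?wout] at h0
    case wout =>
      intro w' _ hw'
      refine Finset.sum_eq_zero fun r _ => ?_
      by_cases hcond : (∑ pos : Fin (ℓ : ℕ), Finsupp.single (r pos) (1 : ℕ)) =
          ∑ j : Fin (ℓ : ℕ), Finsupp.single j (1 : ℕ)
      swap
      · rw [if_neg hcond]
      rw [if_pos hcond]
      have hbij := condBij r hcond
      by_cases hcompat : ∀ pos, w (r pos) = w' pos
      swap
      · -- some slot is zero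
        push_neg at hcompat
        obtain ⟨pos, hpos⟩ := hcompat
        have hzero : (fun pos => if w (r pos) = w' pos then EE (r pos) else 0) pos = 0 :=
          if_neg hpos
        rw [MultilinearMap.map_coord_zero (evalQ (f ℓ w')) pos hzero]
        simp
      · -- w ∘ r = w' ; show r must be the identity, contradicting w' ≠ w, or chain breaks
        by_cases hch : ∀ (i : ℕ) (h1 : i + 1 < (ℓ : ℕ)),
            v (r ⟨i, by omega⟩) = u (r ⟨i + 1, h1⟩)
        · -- chain holds: r = id, so w' = w, contradiction
          exfalso
          have hid := stair_unique r hbij (fun i h1 => by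
            have := congrArg Fin.val (hch i h1)
            simpa [hu, hv] using this)
          apply hw'
          funext pos
          rw [← hcompat pos, hid pos]
        · push_neg at hch
          obtain ⟨i0, h1, hbr⟩ := hch
          have hfun : (fun pos => if w (r pos) = w' pos then EE (r pos) else 0) =
              (fun pos => Matrix.single (u (r pos)) (v (r pos)) (1 : F) ⊗ₖ c (r pos)) := by
            funext pos
            rw [if_pos (hcompat pos), hEE]
          rw [hfun, evalQ_apply,
            lift_evalGen_kron (fun pos => Matrix.single (u (r pos)) (v (r pos)) (1 : F))
              (fun pos => c (r pos)) (f ℓ w'),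
            eprod_break (ℓ : ℕ) (fun pos => u (r pos)) (fun pos => v (r pos)) i0 h1 hbr,
            Matrix.zero_kronecker]
          simp
    rw [Finset.sum_eq_single_of_mem (fun pos => pos) (Finset.mem_univ _) ?rout] at h0
    case rout =>
      intro r _ hr
      by_cases hcond : (∑ pos : Fin (ℓ : ℕ), Finsupp.single (r pos) (1 : ℕ)) =
          ∑ j : Fin (ℓ : ℕ), Finsupp.single j (1 : ℕ)
      swap
      · rw [if_neg hcond]
      rw [if_pos hcond]
      have hbij := condBij r hcond
      by_cases hcompat : ∀ pos, w (r pos) = w pos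
      swap
      · push_neg at hcompat
        obtain ⟨pos, hpos⟩ := hcompat
        have hzero : (fun pos => if w (r pos) = w pos then EE (r pos) else 0) pos = 0 :=
          if_neg hpos
        rw [MultilinearMap.map_coord_zero (evalQ (f ℓ w)) pos hzero]
        simp
      · by_cases hch : ∀ (i : ℕ) (h1 : i + 1 < (ℓ : ℕ)),
            v (r ⟨i, by omega⟩) = u (r ⟨i + 1, h1⟩)
        · exfalso
          have hid := stair_unique r hbij (fun i h1 => by
            have := congrArg Fin.val (hch i h1)
            simpa [hu, hv] using this)
          exact hr (funext fun pos => hid pos)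
        · push_neg at hch
          obtain ⟨i0, h1, hbr⟩ := hch
          have hfun : (fun pos => if w (r pos) = w pos then EE (r pos) else 0) =
              (fun pos => Matrix.single (u (r pos)) (v (r pos)) (1 : F) ⊗ₖ c (r pos)) := by
            funext pos
            rw [if_pos (hcompat pos), hEE]
          rw [hfun, evalQ_apply,
            lift_evalGen_kron (fun pos => Matrix.single (u (r pos)) (v (r pos)) (1 : F))
              (fun pos => c (r pos)) (f ℓ w),
            eprod_break (ℓ : ℕ) (fun pos => u (r pos)) (fun pos => v (r pos)) i0 h1 hbr,
            Matrix.zero_kronecker]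
          simp
    -- the surviving term
    have hidcond : (∑ pos : Fin (ℓ : ℕ),
        Finsupp.single ((fun (p : Fin (ℓ : ℕ)) => p) pos) (1 : ℕ)) =
        ∑ j : Fin (ℓ : ℕ), Finsupp.single j (1 : ℕ) :=
      Finset.sum_congr rfl fun _ _ => rfl
    rw [if_pos hidcond] at h0
    refine Eq.trans (congrArg (fun q => (evalQ (f ℓ w) q) uv1 uv2) ?_) h0
    funext pos
    rw [if_pos rfl]
  -- Step D: conclude via the Kronecker structure
  have hEfin : PiTensorProduct.lift
      (evalGen (fun pos : Fin (ℓ : ℕ) => Matrix.single (u pos) (v pos) (1 : F) ⊗ₖ c pos))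
      (f ℓ w) = 0 := by
    ext uv1 uv2
    exact prune uv1 uv2
  rw [lift_evalGen_kron (fun pos => Matrix.single (u pos) (v pos) (1 : F)) c (f ℓ w)]
    at hEfin
  -- extract the nonzero entry of the staircase product
  have hs0 : (0 : ℕ) < (h + 2) / 2 := by omega
  have hl2 : (ℓ : ℕ) / 2 < (h + 2) / 2 := by have := ℓ.isLt; omega
  have hent : (eprod (fun pos : Fin (ℓ : ℕ) =>
      Matrix.single (u pos) (v pos) (1 : F))) ⟨0, hs0⟩ ⟨(ℓ : ℕ) / 2, hl2⟩ = 1 := by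
    rcases Nat.eq_zero_or_pos (ℓ : ℕ) with hzero | hpos
    · exact eprod_entry_one hzero _ _ _ (Fin.ext (by simp; omega))
    · rw [eprod_chain (ℓ : ℕ) u v ?chain hpos]
      case chain =>
        intro i h1
        apply Fin.ext
        simp [hu, hv]
      have e1 : u ⟨0, hpos⟩ = ⟨0, hs0⟩ := Fin.ext (by simp [hu])
      have e2 : v ⟨(ℓ : ℕ) - 1, by omega⟩ = ⟨(ℓ : ℕ) / 2, hl2⟩ := Fin.ext (by simp [hv]; omega)
      rw [e1, e2, Matrix.single_apply_same]
  ext i j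
  have := congrArg (fun A => A (⟨0, hs0⟩, i) (⟨(ℓ : ℕ) / 2, hl2⟩, j)) hEfin
  simp only [Matrix.kroneckerMap_apply, Matrix.zero_apply] at this
  rw [hent, one_mul] at this
  simpa using this
end

section
/- Let F be a field and S a noncommutative formal power series over F. Define the Hankel module (smallest stable subspace) H_S as the F-span of {L_v S : v a word}, where (L_v S, w) = (S, vw). Then S is recognizable if and only if H_S is finite-dimensional over F; and in that case, dim_F H_S equals the minimal dimension of a linear representation of S. -/
open Matrix

/-- The set of dimensions of linear representations of a series `S`. -/
def repDims {F σ : Type*} [Field F] (S : List σ → F) : Set ℕ :=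
  {n | ∃ (c : Fin n → F) (A : σ → Matrix (Fin n) (Fin n) F) (b : Fin n → F),
    ∀ w : List σ, S w = c ⬝ᵥ ((w.map A).prod).mulVec b}

/-- The Hankel module of `S`: the span of all left shifts `L_v S`. -/
def hankel {F σ : Type*} [Field F] (S : List σ → F) : Submodule F (List σ → F) :=
  Submodule.span F (Set.range fun v : List σ => fun w => S (v ++ w))

section Aux

variable {F σ : Type*} [Field F]

/-- Left shift by one letter, as a linear map. -/
def shiftL (a : σ) : (List σ → F) →ₗ[F] (List σ → F) where
  toFun f := fun w => f (a :: w)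
  map_add' _ _ := rfl
  map_smul' _ _ := rfl

lemma shift_mem_hankel (S : List σ → F) (a : σ) {f : List σ → F} (hf : f ∈ hankel S) :
    shiftL a f ∈ hankel S := by
  have : Submodule.map (shiftL (F := F) a) (hankel S) ≤ hankel S := by
    rw [hankel, Submodule.map_span, Submodule.span_le]
    rintro - ⟨-, ⟨v, rfl⟩, rfl⟩
    exact Submodule.subset_span ⟨v ++ [a], by funext w; simp [shiftL, List.append_assoc]⟩
  exact this ⟨f, hf, rfl⟩

lemma self_mem_hankel (S : List σ → F) : S ∈ hankel S :=
  Submodule.subset_span ⟨[], rfl⟩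

/-- If `S` has a representation of dimension `n`, the Hankel module is contained in the
span of the `n` "column" series. -/
lemma hankel_le_span {n : ℕ} (S : List σ → F) (c : Fin n → F)
    (A : σ → Matrix (Fin n) (Fin n) F) (b : Fin n → F)
    (h : ∀ w : List σ, S w = c ⬝ᵥ ((w.map A).prod).mulVec b) :
    hankel S ≤ Submodule.span F
      (Set.range fun i : Fin n => fun w : List σ => ((w.map A).prod).mulVec b i) := by
  rw [hankel, Submodule.span_le]
  rintro - ⟨v, rfl⟩
  have : (fun w => S (v ++ w)) =
      ∑ i : Fin n, (vecMul c ((v.map A).prod)) i •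
        (fun w : List σ => ((w.map A).prod).mulVec b i) := by
    funext w
    rw [h (v ++ w)]
    simp only [Finset.sum_apply, Pi.smul_apply, smul_eq_mul]
    rw [List.map_append, List.prod_append, ← Matrix.mulVec_mulVec,
      Matrix.dotProduct_mulVec]
    rfl
  have hmem : (fun w => S (v ++ w)) ∈ Submodule.span F
      (Set.range fun i : Fin n => fun w : List σ => ((w.map A).prod).mulVec b i) := by
    rw [this]
    exact Submodule.sum_mem _ fun i _ =>
      Submodule.smul_mem _ _ (Submodule.subset_span ⟨i, rfl⟩)
  exact hmem

lemma mem_repDims (S : List σ → F) [Module.Finite F (hankel S)] :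
    Module.finrank F (hankel S) ∈ repDims S := by
  classical
  set n := Module.finrank F (hankel S) with hn
  let g : Module.Basis (Fin n) F (hankel S) := Module.finBasis F (hankel S)
  let A : σ → Matrix (Fin n) (Fin n) F := fun a i j =>
    g.repr ⟨shiftL a (g i : List σ → F), shift_mem_hankel S a (g i).2⟩ j
  let b : Fin n → F := fun i => (g i : List σ → F) []
  let c : Fin n → F := fun i => g.repr ⟨S, self_mem_hankel S⟩ i
  have key : ∀ (w : List σ) (i : Fin n),
      (g i : List σ → F) w = ((w.map A).prod).mulVec b i := by
    intro w
    induction w with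
    | nil => intro i; simp [b]
    | cons a w ih =>
      intro i
      have hg : (shiftL a (g i : List σ → F)) =
          ((∑ j, A a i j • g j : hankel S) : List σ → F) := by
        have := g.sum_repr ⟨shiftL a (g i : List σ → F), shift_mem_hankel S a (g i).2⟩
        exact (congrArg Subtype.val this).symm
      have : (g i : List σ → F) (a :: w) = (shiftL a (g i : List σ → F)) w := rfl
      rw [this, hg]
      have hsum : ((∑ j, A a i j • g j : hankel S) : List σ → F) w
          = ∑ j, A a i j * (g j : List σ → F) w := by
        rw [Submodule.coe_sum]
        simp
      rw [hsum]
      simp only [ih]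
      rw [List.map_cons, List.prod_cons, ← Matrix.mulVec_mulVec]
      rfl
  refine ⟨c, A, b, fun w => ?_⟩
  have hS : S = ((∑ i, c i • g i : hankel S) : List σ → F) := by
    have := g.sum_repr ⟨S, self_mem_hankel S⟩
    exact (congrArg Subtype.val this).symm
  conv_lhs => rw [hS]
  rw [Submodule.coe_sum]
  simp only [Finset.sum_apply, Pi.smul_apply, SetLike.val_smul, smul_eq_mul]
  rw [dotProduct]
  exact Finset.sum_congr rfl fun i _ => by rw [key w i]

end Aux

/-- `S` is recognizable iff its Hankel module is finite-dimensional, in which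
case `dim_F H_S` equals the minimal dimension of a linear representation of `S`. -/
theorem stmt_15 {F σ : Type*} [Field F] [Fintype σ] (S : List σ → F) :
    ((repDims S).Nonempty ↔ Module.Finite F (hankel S)) ∧
    ((repDims S).Nonempty → Module.finrank F (hankel S) = sInf (repDims S)) := by
  have fin_of_rep : ∀ n ∈ repDims S, Module.Finite F (hankel S) ∧
      Module.finrank F (hankel S) ≤ n := by
    rintro n ⟨c, A, b, h⟩
    have hle := hankel_le_span S c A b h
    set f : Fin n → (List σ → F) := fun i => fun w => ((w.map A).prod).mulVec b i with hf
    have : Module.Finite F (Submodule.span F (Set.range f)) :=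
      FiniteDimensional.span_of_finite F (Set.finite_range _)
    refine ⟨Submodule.finiteDimensional_of_le hle, ?_⟩
    have h2 : Module.finrank F (Submodule.span F (Set.range f)) ≤ n := by
      simpa [Set.finrank] using finrank_range_le_card (R := F) f
    exact (Submodule.finrank_mono hle).trans h2
  constructor
  · constructor
    · rintro ⟨n, hn⟩
      exact (fin_of_rep n hn).1
    · intro hfin
      exact ⟨_, mem_repDims S⟩
  · rintro ⟨n, hn⟩
    have hfin : Module.Finite F (hankel S) := (fin_of_rep n hn).1
    refine le_antisymm ?_ (Nat.sInf_le (mem_repDims S))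
    exact le_csInf ⟨n, hn⟩ fun m hm => (fin_of_rep m hm).2
end

section
/- Let ℓ ≥ 1 and let A be a unital simple ring with center F. Elements a₁,…,a_ℓ ∈ A are linearly dependent over F if and only if the Capelli polynomial evaluates to zero for all choices of parameters: c_ℓ(a₁,…,a_ℓ; b₁,…,b_{ℓ−1}) = Σ_{π ∈ S_ℓ} sign(π) a_{π(1)} b₁ a_{π(2)} b₂ ⋯ b_{ℓ−1} a_{π(ℓ)} = 0 for all b₁,…,b_{ℓ−1} ∈ A. -/
open TensorProduct MulOpposite

/-- The Capelli polynomial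
`c_{n+1}(a₁,…,a_{n+1}; b₁,…,b_n) = Σ_π sign(π) a_{π(1)} b₁ a_{π(2)} ⋯ b_n a_{π(n+1)}`
evaluated in a ring. -/
noncomputable def capelli {A : Type*} [Ring A] (n : ℕ) (a : Fin (n + 1) → A) (b : Fin n → A) : A :=
  ∑ π : Equiv.Perm (Fin (n + 1)),
    ((Equiv.Perm.sign π : ℤ) •
      (a (π 0) * (List.ofFn fun i : Fin n => b i * a (π i.succ)).prod))



section Aux
variable {F A : Type*} [Field F] [Ring A] [Algebra F A]

noncomputable def capelliAux (n : ℕ) (b : Fin n → A) :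
    MultilinearMap F (fun _ : Fin (n + 1) => A) A :=
  (MultilinearMap.mkPiAlgebraFin F (n + 1) A).compLinearMap
    (Fin.cases LinearMap.id (fun i => LinearMap.mulLeft F (b i)))

lemma capelliAux_apply (n : ℕ) (b : Fin n → A) (v : Fin (n + 1) → A) :
    capelliAux (F := F) n b v
      = v 0 * (List.ofFn fun i : Fin n => b i * v i.succ).prod := by
  simp [capelliAux, List.ofFn_succ]

lemma capelli_eq_alternatization (n : ℕ) (a : Fin (n + 1) → A) (b : Fin n → A) :
    capelli n a b = MultilinearMap.alternatization (capelliAux (F := F) n b) a := by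
  rw [MultilinearMap.alternatization_apply, capelli]
  refine Finset.sum_congr rfl fun π _ => ?_
  rw [MultilinearMap.domDomCongr_apply, capelliAux_apply, Units.smul_def]

lemma capelli_eq_zero_of_not_linearIndependent {n : ℕ} {a : Fin (n + 1) → A}
    (h : ¬ LinearIndependent F a) (b : Fin n → A) : capelli n a b = 0 := by
  rw [capelli_eq_alternatization (F := F)]
  exact AlternatingMap.map_linearDependent _ a h

end Aux



section Part3
variable {A : Type*} [Ring A]

lemma capelli_zero_eval (a : Fin 1 → A) (b : Fin 0 → A) :
    capelli 0 a b = a 0 := by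
  rw [capelli]
  rw [Finset.sum_congr rfl (fun (π : Equiv.Perm (Fin 1)) _ => by
    rw [Subsingleton.elim π 1] :
    ∀ π ∈ Finset.univ, _ = ((Equiv.Perm.sign (1 : Equiv.Perm (Fin 1)) : ℤ) •
      ((a ((1 : Equiv.Perm (Fin 1)) 0) *
        (List.ofFn fun i : Fin 0 => b i * a ((1 : Equiv.Perm (Fin 1)) i.succ)).prod))))]
  rw [Finset.sum_const, Finset.card_univ]
  simp [Fintype.card_perm]

lemma capelli_cons (n : ℕ) (a : Fin (n + 2) → A) (b' : Fin n → A) (u : A) :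
    capelli (n + 1) a (Fin.cons u b') =
      ∑ p : Fin (n + 2), a p * u *
        ((if p = 0 then (1 : ℤ) else -1) •
          capelli n (fun k => a (Equiv.swap 0 p k.succ)) b') := by
  rw [capelli]
  refine (Fintype.sum_equiv Equiv.Perm.decomposeFin _
    (fun q : Fin (n + 2) × Equiv.Perm (Fin (n + 1)) =>
      ((Equiv.Perm.sign (Equiv.Perm.decomposeFin.symm q) : ℤ) •
        (a (Equiv.Perm.decomposeFin.symm q 0) *
          (List.ofFn fun i : Fin (n + 1) =>
            (Fin.cons u b' : Fin (n + 1) → A) i * a (Equiv.Perm.decomposeFin.symm q i.succ)).prod)))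
    (fun π => by simp only [Equiv.symm_apply_apply])).trans ?_
  rw [Fintype.sum_prod_type]
  refine Finset.sum_congr rfl fun p _ => ?_
  rw [capelli, Finset.smul_sum, Finset.mul_sum]
  refine Finset.sum_congr rfl fun σ _ => ?_
  rw [Equiv.Perm.decomposeFin.symm_sign, Equiv.Perm.decomposeFin_symm_apply_zero,
    List.ofFn_succ, List.prod_cons]
  simp only [Equiv.Perm.decomposeFin_symm_apply_succ, Fin.cons_zero, Fin.cons_succ,
    Units.val_mul, mul_smul]
  rw [apply_ite (fun (w : ℤˣ) => (w : ℤ))]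
  push_cast
  rw [mul_smul_comm, mul_smul_comm, mul_assoc (a p) u, mul_assoc u]

end Part3



section Simple
variable {F A : Type*} [Field F] [Ring A] [Algebra F A]

noncomputable local instance (priority := low) moduleTensor : Module (A ⊗[F] Aᵐᵒᵖ) A :=
  TensorProduct.Algebra.module

lemma tmul_smul_def (x y m : A) : (x ⊗ₜ[F] op y) • m = x * m * y := by
  show TensorProduct.Algebra.moduleAux (x ⊗ₜ[F] op y) m = _
  rw [TensorProduct.Algebra.moduleAux_apply]
  simp [op_smul_eq_mul, smul_eq_mul, mul_assoc]

variable [IsSimpleRing A]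

lemma isSimpleModule_tensor : IsSimpleModule (A ⊗[F] Aᵐᵒᵖ) A := by
  rw [isSimpleModule_iff]
  constructor
  intro p
  let I : TwoSidedIdeal A := TwoSidedIdeal.mk' (p : Set A) p.zero_mem
    (fun hx hy => p.add_mem hx hy)
    (fun {x} hx => by
      have := p.smul_mem ((-1 : A) ⊗ₜ[F] op (1 : A)) hx
      rwa [tmul_smul_def, neg_one_mul, mul_one] at this)
    (fun {x y} hy => by
      have := p.smul_mem (x ⊗ₜ[F] op (1 : A)) hy
      rwa [tmul_smul_def, mul_one] at this)
    (fun {x y} hx => by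
      have := p.smul_mem ((1 : A) ⊗ₜ[F] op y) hx
      rwa [tmul_smul_def, one_mul] at this)
  rcases eq_bot_or_eq_top I with h | h
  · left
    ext x
    simp only [Submodule.mem_bot]
    constructor
    · intro hx
      have : x ∈ I := by rw [TwoSidedIdeal.mem_mk']; exact hx
      rw [h] at this
      simpa using this
    · rintro rfl; exact p.zero_mem
  · right
    ext x
    simp only [Submodule.mem_top, iff_true]
    have : x ∈ I := by rw [h]; trivial
    rwa [TwoSidedIdeal.mem_mk'] at this

lemma exists_smul_of_linear (hcentral : Subalgebra.center F A = ⊥)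
    (f : A →ₗ[A ⊗[F] Aᵐᵒᵖ] A) : ∃ c : F, ∀ x : A, f x = c • x := by
  have h1 : ∀ x : A, f x = x * f 1 := fun x => by
    have hx : (x ⊗ₜ[F] op (1 : A)) • (1 : A) = x := by rw [tmul_smul_def]; simp
    calc f x = f ((x ⊗ₜ[F] op (1 : A)) • (1 : A)) := by rw [hx]
    _ = (x ⊗ₜ[F] op (1 : A)) • f 1 := f.map_smul _ _
    _ = x * f 1 := by rw [tmul_smul_def]; simp
  have h2 : ∀ x : A, f x = f 1 * x := fun x => by
    have hx : ((1 : A) ⊗ₜ[F] op x) • (1 : A) = x := by rw [tmul_smul_def]; simp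
    calc f x = f (((1 : A) ⊗ₜ[F] op x) • (1 : A)) := by rw [hx]
    _ = ((1 : A) ⊗ₜ[F] op x) • f 1 := f.map_smul _ _
    _ = f 1 * x := by rw [tmul_smul_def]; simp
  have hc : f 1 ∈ Subalgebra.center F A :=
    Subalgebra.mem_center_iff.mpr fun b => by rw [← h1 b, h2 b]
  rw [hcentral] at hc
  obtain ⟨c, hc⟩ := Algebra.mem_bot.mp hc
  exact ⟨c, fun x => by rw [h1 x, ← hc, ← Algebra.commutes, ← Algebra.smul_def]⟩

lemma isSemisimple_pi_tensor (m : ℕ) :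
    IsSemisimpleModule (A ⊗[F] Aᵐᵒᵖ) (Fin m → A) := by
  haveI : IsSimpleModule (A ⊗[F] Aᵐᵒᵖ) A := isSimpleModule_tensor
  haveI : IsSemisimpleModule (A ⊗[F] Aᵐᵒᵖ) A := inferInstance
  refine isSemisimpleModule_of_isSemisimpleModule_submodule'
    (p := fun i : Fin m => LinearMap.range
      (LinearMap.single (A ⊗[F] Aᵐᵒᵖ) (fun _ : Fin m => A) i)) (fun i => ?_) ?_
  · have hinj : Function.Injective (LinearMap.single (A ⊗[F] Aᵐᵒᵖ) (fun _ : Fin m => A) i) := by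
      intro x y hxy
      have := congrFun hxy i
      simpa [LinearMap.coe_single] using this
    exact IsSemisimpleModule.congr (LinearEquiv.ofInjective _ hinj).symm
  · ext v
    simp only [Submodule.mem_top, iff_true]
    rw [← Finset.univ_sum_single v]
    exact Submodule.sum_mem _ fun j _ =>
      Submodule.mem_iSup_of_mem j ⟨v j, rfl⟩

lemma density (hcentral : Subalgebra.center F A = ⊥) (m : ℕ) (a : Fin m → A)
    (ha : LinearIndependent F a) (j₀ : Fin m) :
    ∃ r : A ⊗[F] Aᵐᵒᵖ, ∀ j, r • a j = if j = j₀ then 1 else 0 := by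
  set μ : (A ⊗[F] Aᵐᵒᵖ) →ₗ[A ⊗[F] Aᵐᵒᵖ] (Fin m → A) :=
    LinearMap.pi fun j => LinearMap.toSpanSingleton (A ⊗[F] Aᵐᵒᵖ) A (a j) with hμ
  have hμ1 : μ 1 = a := by
    funext j
    simp [hμ, LinearMap.toSpanSingleton_apply]
  have hsurj : LinearMap.range μ = ⊤ := by
    by_contra hN
    haveI := isSemisimple_pi_tensor (F := F) (A := A) m
    obtain ⟨N', hcompl⟩ := exists_isCompl (LinearMap.range μ)
    set π : (Fin m → A) →ₗ[A ⊗[F] Aᵐᵒᵖ] (Fin m → A) :=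
      N'.subtype ∘ₗ Submodule.projectionOnto N' (LinearMap.range μ) hcompl.symm with hπ
    have hπ0 : ∀ v ∈ LinearMap.range μ, π v = 0 := fun v hv => by
      have := Submodule.linearProjOfIsCompl_apply_right hcompl.symm ⟨v, hv⟩
      simp only [hπ, LinearMap.comp_apply]
      rw [show (⟨v, hv⟩ : LinearMap.range μ).1 = v from rfl] at this
      rw [this]
      rfl
    have hπid : ∀ v ∈ N', π v = v := fun v hv => by
      have := Submodule.linearProjOfIsCompl_apply_left hcompl.symm ⟨v, hv⟩
      simp only [hπ, LinearMap.comp_apply]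
      rw [show (⟨v, hv⟩ : N').1 = v from rfl] at this
      rw [this]
      rfl
    choose c hc using fun i j =>
      exists_smul_of_linear hcentral
        ((LinearMap.proj i) ∘ₗ π ∘ₗ (LinearMap.single (A ⊗[F] Aᵐᵒᵖ) (fun _ : Fin m => A) j))
    have hcc : ∀ i j (x : A), π (Pi.single j x) i = c i j • x := fun i j x => hc i j x
    have hπform : ∀ v : Fin m → A, ∀ i, π v i = ∑ j, c i j • v j := by
      intro v i
      conv_lhs => rw [← Finset.univ_sum_single v, map_sum]
      rw [Finset.sum_apply]
      exact Finset.sum_congr rfl fun j _ => hcc i j (v j)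
    have hca : ∀ i j, c i j = 0 := by
      intro i
      have h0 : π a = 0 := hπ0 a ⟨1, hμ1⟩
      have h1 : ∑ j, c i j • a j = 0 := by
        have := hπform a i
        rw [h0] at this
        simpa using this.symm
      exact fun j => Fintype.linearIndependent_iff.mp ha (c i) h1 j
    have hN' : N' ≠ ⊥ := by
      intro h
      rw [h] at hcompl
      exact hN (by simpa using hcompl.sup_eq_top)
    obtain ⟨x, hxN, hx0⟩ := (Submodule.ne_bot_iff _).mp hN'
    apply hx0
    rw [← hπid x hxN]
    funext i
    rw [hπform x i]
    simp [hca]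
  obtain ⟨r, hr⟩ := (LinearMap.range_eq_top.mp hsurj) (Pi.single j₀ (1 : A))
  refine ⟨r, fun j => ?_⟩
  have := congrFun hr j
  simpa [hμ, LinearMap.toSpanSingleton_apply, Pi.single_apply] using this

lemma killer (hcentral : Subalgebra.center F A = ⊥) (m : ℕ) (a e : Fin m → A)
    (ha : LinearIndependent F a) (H : ∀ u : A, ∑ j, a j * u * e j = 0) :
    ∀ j₀, e j₀ = 0 := by
  intro j₀
  obtain ⟨r, hr⟩ := density hcentral m a ha j₀
  have key : ∀ r : A ⊗[F] Aᵐᵒᵖ, ∑ j, (r • a j) * e j = 0 := by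
    intro r
    induction r using TensorProduct.induction_on with
    | zero =>
      simp_rw [← TensorProduct.zero_tmul A (op (0:A)), tmul_smul_def]
      simp
    | tmul x y =>
      have hs : ∀ j, (x ⊗ₜ[F] y) • a j = x * a j * unop y := fun j => by
        rw [← op_unop y, tmul_smul_def, unop_op]
      have h2 : ∑ j, x * a j * unop y * e j = x * ∑ j, a j * unop y * e j := by
        rw [Finset.mul_sum]
        exact Finset.sum_congr rfl fun j _ => by
          rw [mul_assoc x (a j) (unop y), mul_assoc x (a j * unop y) (e j)]
      simp_rw [hs]
      rw [h2, H (unop y), mul_zero]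
    | add r s hrI hsI =>
      simp_rw [add_smul, add_mul, Finset.sum_add_distrib, hrI, hsI, add_zero]
  have h := key r
  simp_rw [hr, ite_mul, one_mul, zero_mul] at h
  rwa [Finset.sum_ite_eq' Finset.univ j₀ e, if_pos (Finset.mem_univ _)] at h

end Simple


section Main
variable {F A : Type*} [Field F] [Ring A] [Algebra F A] [IsSimpleRing A]

lemma exists_capelli_ne_zero (hcentral : Subalgebra.center F A = ⊥) :
    ∀ n (a : Fin (n + 1) → A), LinearIndependent F a → ∃ b : Fin n → A, capelli n a b ≠ 0 := by
  intro n
  induction n with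
  | zero =>
    intro a ha
    exact ⟨fun i => i.elim0, by rw [capelli_zero_eval]; exact ha.ne_zero 0⟩
  | succ n IH =>
    intro a ha
    by_contra hb
    push_neg at hb
    have htail : LinearIndependent F (a ∘ Fin.succ) := ha.comp Fin.succ (Fin.succ_injective _)
    obtain ⟨b', hb'⟩ := IH (a ∘ Fin.succ) htail
    have H : ∀ u : A, ∑ p : Fin (n + 2), a p * u *
        ((if p = 0 then (1 : ℤ) else -1) •
          capelli n (fun k => a (Equiv.swap 0 p k.succ)) b') = 0 := fun u => by
      rw [← capelli_cons]; exact hb _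
    have h0 := killer hcentral (n + 2) a
      (fun p => (if p = 0 then (1 : ℤ) else -1) •
        capelli n (fun k => a (Equiv.swap 0 p k.succ)) b') ha H 0
    apply hb'
    simpa [Equiv.swap_self, Function.comp_def] using h0

end Main

/-- In a unital simple ring `A` with center `F`, elements `a₁,…,a_ℓ` are
`F`-linearly dependent iff all evaluations of the Capelli polynomial at them
vanish. -/
theorem stmt_16 {F A : Type*} [Field F] [Ring A] [Algebra F A]
    [IsSimpleRing A] (hcentral : Subalgebra.center F A = ⊥)
    (n : ℕ) (a : Fin (n + 1) → A) :
    ¬ LinearIndependent F a ↔ ∀ b : Fin n → A, capelli n a b = 0 := by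
  constructor
  · intro h b
    exact capelli_eq_zero_of_not_linearIndependent h b
  · intro h hLI
    obtain ⟨b, hb⟩ := exists_capelli_ne_zero hcentral n a hLI
    exact hb (h b)
end
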